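/- arXiv:2104.06423 — 4 statements merged into one kernel-verified Lean document; each statement's English description precedes it below -/
import Mathlib

section
/- For random matrices with i.i.d. standard complex Gaussian entries, the 2t-th moment of the permanent of a k×k matrix equals the 2k-th moment of the permanent of a t×t matrix: E_{M ~ G^{k×k}} |Perm(M)|^{2t} = E_{M ~ G^{t×t}} |Perm(M)|^{2k}. -/
open MeasureTheory ProbabilityTheory

/-- `M` is a random `k × k` matrix whose entries are i.i.d. standard complex Gaussian
random variables, characterized by independence of the entries together with the
mixed moments `E[x^a * conj x ^ b] = a! * δ_{a b}` of a standard complex Gaussian. -/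
def IsIIDStdComplexGaussianMatrix {Ω : Type*} [MeasurableSpace Ω] (P : Measure Ω)
    {k : ℕ} (M : Ω → Matrix (Fin k) (Fin k) ℂ) : Prop :=
  (∀ i j, Measurable fun ω => M ω i j) ∧
  iIndepFun (fun p : Fin k × Fin k => fun ω => M ω p.1 p.2) P ∧
  (∀ i j (a b : ℕ), Integrable
      (fun ω => (M ω i j) ^ a * (starRingEnd ℂ) (M ω i j) ^ b) P) ∧
  (∀ i j (a b : ℕ),
    ∫ ω, (M ω i j) ^ a * (starRingEnd ℂ) (M ω i j) ^ b ∂P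
      = if a = b then (a.factorial : ℂ) else 0)

namespace GaussPermAux

open Finset Equiv

section Analytic

variable {Ω : Type*} [MeasurableSpace Ω] {μ : Measure Ω}

lemma integral_mul_complex {X Y : Ω → ℂ} (h : IndepFun X Y μ)
    (hX : Integrable X μ) (hY : Integrable Y μ) :
    ∫ ω, X ω * Y ω ∂μ = (∫ ω, X ω ∂μ) * ∫ ω, Y ω ∂μ := by
  have hXY : Integrable (fun ω => X ω * Y ω) μ := h.integrable_mul hX hY
  have hXr : Integrable (fun ω => (X ω).re) μ := hX.re
  have hXi : Integrable (fun ω => (X ω).im) μ := hX.im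
  have hYr : Integrable (fun ω => (Y ω).re) μ := hY.re
  have hYi : Integrable (fun ω => (Y ω).im) μ := hY.im
  have hrr := h.comp Complex.measurable_re Complex.measurable_re
  have hri := h.comp Complex.measurable_re Complex.measurable_im
  have hir := h.comp Complex.measurable_im Complex.measurable_re
  have hii := h.comp Complex.measurable_im Complex.measurable_im
  have irr : Integrable (fun ω => (X ω).re * (Y ω).re) μ := hrr.integrable_mul hXr hYr
  have iri : Integrable (fun ω => (X ω).re * (Y ω).im) μ := hri.integrable_mul hXr hYi
  have iir : Integrable (fun ω => (X ω).im * (Y ω).re) μ := hir.integrable_mul hXi hYr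
  have iii : Integrable (fun ω => (X ω).im * (Y ω).im) μ := hii.integrable_mul hXi hYi
  have err : ∫ ω, (X ω).re * (Y ω).re ∂μ = (∫ ω, (X ω).re ∂μ) * ∫ ω, (Y ω).re ∂μ :=
    IndepFun.integral_fun_mul_eq_mul_integral hrr hXr.aestronglyMeasurable hYr.aestronglyMeasurable
  have eri : ∫ ω, (X ω).re * (Y ω).im ∂μ = (∫ ω, (X ω).re ∂μ) * ∫ ω, (Y ω).im ∂μ :=
    IndepFun.integral_fun_mul_eq_mul_integral hri hXr.aestronglyMeasurable hYi.aestronglyMeasurable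
  have eir : ∫ ω, (X ω).im * (Y ω).re ∂μ = (∫ ω, (X ω).im ∂μ) * ∫ ω, (Y ω).re ∂μ :=
    IndepFun.integral_fun_mul_eq_mul_integral hir hXi.aestronglyMeasurable hYr.aestronglyMeasurable
  have eii : ∫ ω, (X ω).im * (Y ω).im ∂μ = (∫ ω, (X ω).im ∂μ) * ∫ ω, (Y ω).im ∂μ :=
    IndepFun.integral_fun_mul_eq_mul_integral hii hXi.aestronglyMeasurable hYi.aestronglyMeasurable
  have jXr : (∫ ω, X ω ∂μ).re = ∫ ω, (X ω).re ∂μ := (integral_re hX).symm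
  have jXi : (∫ ω, X ω ∂μ).im = ∫ ω, (X ω).im ∂μ := (integral_im hX).symm
  have jYr : (∫ ω, Y ω ∂μ).re = ∫ ω, (Y ω).re ∂μ := (integral_re hY).symm
  have jYi : (∫ ω, Y ω ∂μ).im = ∫ ω, (Y ω).im ∂μ := (integral_im hY).symm
  apply Complex.ext
  · calc (∫ ω, X ω * Y ω ∂μ).re
        = ∫ ω, (X ω * Y ω).re ∂μ := (integral_re hXY).symm
      _ = ∫ ω, ((X ω).re * (Y ω).re - (X ω).im * (Y ω).im) ∂μ := by
          simp only [Complex.mul_re]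
      _ = ((∫ ω, X ω ∂μ) * ∫ ω, Y ω ∂μ).re := by
          rw [integral_sub irr iii, err, eii, Complex.mul_re, jXr, jXi, jYr, jYi]
  · calc (∫ ω, X ω * Y ω ∂μ).im
        = ∫ ω, (X ω * Y ω).im ∂μ := (integral_im hXY).symm
      _ = ∫ ω, ((X ω).re * (Y ω).im + (X ω).im * (Y ω).re) ∂μ := by
          simp only [Complex.mul_im]
      _ = ((∫ ω, X ω ∂μ) * ∫ ω, Y ω ∂μ).im := by
          rw [integral_add iri iir, eri, eir, Complex.mul_im, jXr, jXi, jYr, jYi]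

lemma integral_prod_complex {ι : Type*} [IsProbabilityMeasure μ]
    (Y : ι → Ω → ℂ) (hind : iIndepFun Y μ)
    (hmeas : ∀ i, Measurable (Y i)) (hint : ∀ i, Integrable (Y i) μ) (s : Finset ι) :
    Integrable (fun ω => ∏ i ∈ s, Y i ω) μ ∧
      ∫ ω, ∏ i ∈ s, Y i ω ∂μ = ∏ i ∈ s, ∫ ω, Y i ω ∂μ := by
  classical
  induction s using Finset.induction_on with
  | empty => simp
  | insert a s ha ih =>
    have hprodeq : (∏ j ∈ s, Y j) = fun ω => ∏ j ∈ s, Y j ω := by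
      funext ω; simp
    have hip : IndepFun (Y a) (fun ω => ∏ j ∈ s, Y j ω) μ := by
      have h2 := hind.indepFun_finsetProd_of_notMem hmeas ha
      rw [hprodeq] at h2
      exact h2.symm
    have hint2 : Integrable (fun ω => Y a ω * ∏ j ∈ s, Y j ω) μ :=
      hip.integrable_mul (hint a) ih.1
    constructor
    · simpa [Finset.prod_insert ha] using hint2
    · calc ∫ ω, ∏ i ∈ insert a s, Y i ω ∂μ
          = ∫ ω, Y a ω * ∏ j ∈ s, Y j ω ∂μ := by
            simp_rw [Finset.prod_insert ha]
        _ = (∫ ω, Y a ω ∂μ) * ∫ ω, ∏ j ∈ s, Y j ω ∂μ :=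
            integral_mul_complex hip (hint a) ih.1
        _ = ∏ i ∈ insert a s, ∫ ω, Y i ω ∂μ := by
            rw [ih.2, Finset.prod_insert ha]

end Analytic

section Counting

variable {α β : Type*} [Fintype α] [Fintype β] [DecidableEq α] [DecidableEq β]

/-- The number of elements in the fiber of `f` over `b`. -/
def fiberCard (f : α → β) (b : β) : ℕ := (univ.filter fun a => f a = b).card

/-- Permutations intertwining two functions correspond to families of fiber equivalences. -/
def permCompEquiv (f g : α → β) :
    {π : Equiv.Perm α // ∀ a, g (π a) = f a} ≃ ∀ b, {a // f a = b} ≃ {a // g a = b} where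
  toFun π b := Equiv.subtypeEquiv π.1 fun a => by rw [← π.2 a]
  invFun E := ⟨Equiv.ofFiberEquiv E, fun a => Equiv.ofFiberEquiv_map E a⟩
  left_inv π := by
    apply Subtype.ext; apply Equiv.ext; intro a; rfl
  right_inv E := by
    funext b; apply Equiv.ext; rintro ⟨a, ha⟩; subst ha; apply Subtype.ext; rfl

lemma card_equiv_ite (A B : Type*) [Fintype A] [Fintype B] [DecidableEq A] [DecidableEq B] :
    Nat.card (A ≃ B)
      = if Nat.card A = Nat.card B then (Nat.card A).factorial else 0 := by
  rw [Nat.card_eq_fintype_card, Nat.card_eq_fintype_card, Nat.card_eq_fintype_card]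
  split_ifs with h
  · exact Fintype.card_equiv (Fintype.equivOfCardEq h)
  · rw [Fintype.card_eq_zero_iff]
    exact ⟨fun e => h (Fintype.card_congr e)⟩

lemma card_perm_comp (f g : α → β) :
    Nat.card {π : Equiv.Perm α // ∀ a, g (π a) = f a}
      = ∏ b, if fiberCard f b = fiberCard g b then (fiberCard f b).factorial else 0 := by
  rw [Nat.card_congr (permCompEquiv f g), Nat.card_pi]
  refine Finset.prod_congr rfl fun b _ => ?_
  rw [card_equiv_ite]
  have h1 : Nat.card {a // f a = b} = fiberCard f b :=
    Nat.card_eq_fintype_card.trans (Fintype.card_subtype _)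
  have h2 : Nat.card {a // g a = b} = fiberCard g b :=
    Nat.card_eq_fintype_card.trans (Fintype.card_subtype _)
  rw [h1, h2]

/-- Triples `(σ, τ, ρ)` of tuples of permutations. -/
abbrev PTup (k t : ℕ) :=
  (Fin t → Equiv.Perm (Fin k)) × (Fin t → Equiv.Perm (Fin k)) × (Fin k → Equiv.Perm (Fin t))

def Cond {k t : ℕ} (x : PTup k t) : Prop :=
  ∀ (i : Fin k) (s : Fin t), x.2.1 (x.2.2 i s) i = x.1 s i

instance {k t : ℕ} : DecidablePred (Cond (k := k) (t := t)) := fun _ =>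
  Fintype.decidableForallFintype

def TS (k t : ℕ) : Finset (PTup k t) := univ.filter Cond

noncomputable def flipFun {k t : ℕ} (x : PTup k t) (h : Cond x) : PTup t k :=
  ⟨x.2.2, fun j => Equiv.ofBijective (fun s => x.2.2 ((x.1 s).symm j) s)
    (Finite.injective_iff_bijective.mp (fun s s' he => by
      have h1 := h ((x.1 s).symm j) s
      have h2 := h ((x.1 s').symm j) s'
      rw [Equiv.apply_symm_apply] at h1 h2
      rw [he] at h1
      have h3 := (x.2.1 (x.2.2 ((x.1 s').symm j) s')).injective (h1.trans h2.symm)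
      rw [h3] at he
      exact (x.2.2 ((x.1 s').symm j)).injective he)),
   x.1⟩

lemma flip_cond {k t : ℕ} (x : PTup k t) (h : Cond x) : Cond (flipFun x h) := by
  intro i s
  show x.2.2 ((x.1 i).symm (x.1 i s)) i = x.2.2 s i
  rw [Equiv.symm_apply_apply]

lemma flip_flip {k t : ℕ} (x : PTup k t) (h : Cond x) :
    flipFun (flipFun x h) (flip_cond x h) = x := by
  obtain ⟨σ, τ, ρ⟩ := x
  simp only [flipFun, Prod.mk.injEq]
  refine ⟨trivial, ?_, trivial⟩
  funext u
  apply Equiv.ext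
  intro i
  show σ ((ρ i).symm u) i = τ u i
  have h2 := h i ((ρ i).symm u)
  rw [Equiv.apply_symm_apply] at h2
  exact h2.symm

lemma ts_card_symm (k t : ℕ) : (TS k t).card = (TS t k).card := by
  refine Finset.card_bij'
    (fun x hx => flipFun x (Finset.mem_filter.mp hx).2)
    (fun y hy => flipFun y (Finset.mem_filter.mp hy).2)
    (fun x hx => Finset.mem_filter.mpr ⟨Finset.mem_univ _, flip_cond x _⟩)
    (fun y hy => Finset.mem_filter.mpr ⟨Finset.mem_univ _, flip_cond y _⟩)
    (fun x hx => flip_flip x _)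
    (fun y hy => flip_flip y _)

/-- `fib σ (j, i)` is the number of `s` with `σ s i = j`. -/
def fib {k t : ℕ} (σ : Fin t → Equiv.Perm (Fin k)) (p : Fin k × Fin k) : ℕ :=
  fiberCard (fun s => σ s p.2) p.1

lemma prod_ite_eq_card {k t : ℕ} (σ τ : Fin t → Equiv.Perm (Fin k)) :
    (∏ p : Fin k × Fin k, if fib σ p = fib τ p then (fib σ p).factorial else 0)
      = Nat.card {ρ : Fin k → Equiv.Perm (Fin t) //
          ∀ (i : Fin k) (s : Fin t), τ (ρ i s) i = σ s i} := by
  calc (∏ p : Fin k × Fin k, if fib σ p = fib τ p then (fib σ p).factorial else 0)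
      = ∏ j : Fin k, ∏ i : Fin k,
          (if fib σ (j, i) = fib τ (j, i) then (fib σ (j, i)).factorial else 0) :=
        Fintype.prod_prod_type _
    _ = ∏ i : Fin k, ∏ j : Fin k,
          (if fib σ (j, i) = fib τ (j, i) then (fib σ (j, i)).factorial else 0) :=
        Finset.prod_comm
    _ = ∏ i : Fin k, Nat.card {π : Equiv.Perm (Fin t) // ∀ s, τ (π s) i = σ s i} :=
        Finset.prod_congr rfl fun i _ =>
          (card_perm_comp (fun s => σ s i) (fun s => τ s i)).symm
    _ = Nat.card (∀ i : Fin k, {π : Equiv.Perm (Fin t) // ∀ s, τ (π s) i = σ s i}) :=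
        (Nat.card_pi).symm
    _ = _ := (Nat.card_congr (Equiv.subtypePiEquivPi
          (p := fun (i : Fin k) (π : Equiv.Perm (Fin t)) => ∀ s, τ (π s) i = σ s i))).symm

lemma sum_eq_ts_card (k t : ℕ) :
    (∑ σ : Fin t → Equiv.Perm (Fin k), ∑ τ : Fin t → Equiv.Perm (Fin k),
      ∏ p : Fin k × Fin k, if fib σ p = fib τ p then (fib σ p).factorial else 0)
      = (TS k t).card := by
  rw [TS, Finset.card_filter, Fintype.sum_prod_type]
  refine Finset.sum_congr rfl fun σ _ => ?_
  rw [Fintype.sum_prod_type]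
  refine Finset.sum_congr rfl fun τ _ => ?_
  rw [prod_ite_eq_card, Nat.card_eq_fintype_card, Fintype.card_subtype, Finset.card_filter]
  exact Finset.sum_congr rfl fun ρ _ => if_congr Iff.rfl rfl rfl

/-- reindexing a product over a tuple of permutations by fibers -/
lemma fib_eq {k t : ℕ} (σ : Fin t → Equiv.Perm (Fin k)) (j i : Fin k) :
    fib σ (j, i) = (univ.filter fun s => σ s i = j).card := rfl

lemma prod_fiber_pow {k t : ℕ} (σ : Fin t → Equiv.Perm (Fin k)) (f : Fin k × Fin k → ℂ) :
    (∏ s : Fin t, ∏ i : Fin k, f (σ s i, i)) = ∏ p : Fin k × Fin k, f p ^ fib σ p := by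
  have key : ∀ i : Fin k,
      (∏ s : Fin t, f (σ s i, i))
        = ∏ j : Fin k, f (j, i) ^ (univ.filter fun s => σ s i = j).card := by
    intro i
    rw [← Finset.prod_fiberwise_of_maps_to (g := fun s : Fin t => σ s i)
      (fun s _ => Finset.mem_univ _) (fun s => f (σ s i, i))]
    refine Finset.prod_congr rfl fun j _ => ?_
    calc ∏ s ∈ univ.filter fun s => σ s i = j, f (σ s i, i)
        = ∏ _s ∈ univ.filter fun s => σ s i = j, f (j, i) :=
          Finset.prod_congr rfl fun s hs => by rw [(Finset.mem_filter.mp hs).2]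
      _ = f (j, i) ^ (univ.filter fun s => σ s i = j).card := Finset.prod_const _
  calc (∏ s : Fin t, ∏ i : Fin k, f (σ s i, i))
      = ∏ i : Fin k, ∏ s : Fin t, f (σ s i, i) := Finset.prod_comm
    _ = ∏ i : Fin k, ∏ j : Fin k, f (j, i) ^ (univ.filter fun s => σ s i = j).card :=
        Finset.prod_congr rfl fun i _ => key i
    _ = ∏ i : Fin k, ∏ j : Fin k, f (j, i) ^ fib σ (j, i) :=
        Finset.prod_congr rfl fun i _ => Finset.prod_congr rfl fun j _ => by
          rw [fib_eq]
    _ = ∏ j : Fin k, ∏ i : Fin k, f (j, i) ^ fib σ (j, i) := Finset.prod_comm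
    _ = ∏ p : Fin k × Fin k, f p ^ fib σ p :=
        (Fintype.prod_prod_type (fun p => f p ^ fib σ p)).symm

end Counting

section Moment

lemma moment_eq {Ω : Type*} [MeasurableSpace Ω] (P : Measure Ω) [IsProbabilityMeasure P]
    (k t : ℕ) (M : Ω → Matrix (Fin k) (Fin k) ℂ)
    (hM : IsIIDStdComplexGaussianMatrix P M) :
    ∫ ω, ‖(M ω).permanent‖ ^ (2*t) ∂P = ((TS k t).card : ℝ) := by
  classical
  obtain ⟨hmeas, hind, hint, hmom⟩ := hM
  have hcast : ∀ z : ℂ, ((‖z‖ ^ (2*t) : ℝ) : ℂ) = z ^ t * ((starRingEnd ℂ) z) ^ t := by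
    intro z
    calc ((‖z‖ ^ (2*t) : ℝ) : ℂ)
        = (((‖z‖ ^ 2 : ℝ)) : ℂ) ^ t := by rw [pow_mul, Complex.ofReal_pow]
      _ = ((Complex.normSq z : ℝ) : ℂ) ^ t := by rw [Complex.sq_norm]
      _ = (z * (starRingEnd ℂ) z) ^ t := by rw [Complex.mul_conj]
      _ = z ^ t * ((starRingEnd ℂ) z) ^ t := mul_pow _ _ _
  -- the per-(σ,τ) integrand
  set F : (Fin t → Equiv.Perm (Fin k)) → (Fin t → Equiv.Perm (Fin k)) → Ω → ℂ :=
    fun σ τ ω => ∏ p : Fin k × Fin k,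
      ((M ω p.1 p.2) ^ fib σ p * ((starRingEnd ℂ) (M ω p.1 p.2)) ^ fib τ p) with hF
  -- pointwise expansion
  have hexp : ∀ ω, ((M ω).permanent) ^ t * ((starRingEnd ℂ) ((M ω).permanent)) ^ t
      = ∑ σ : Fin t → Equiv.Perm (Fin k), ∑ τ : Fin t → Equiv.Perm (Fin k), F σ τ ω := by
    intro ω
    have h1 : ((M ω).permanent) ^ t
        = ∑ σ : Fin t → Equiv.Perm (Fin k), ∏ p : Fin k × Fin k, (M ω p.1 p.2) ^ fib σ p := by
      rw [Matrix.permanent, Finset.sum_pow', Fintype.piFinset_univ]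
      exact Finset.sum_congr rfl fun σ _ => by
        rw [← prod_fiber_pow σ (fun p => M ω p.1 p.2)]
    have h2 : ((starRingEnd ℂ) ((M ω).permanent)) ^ t
        = ∑ τ : Fin t → Equiv.Perm (Fin k),
            ∏ p : Fin k × Fin k, ((starRingEnd ℂ) (M ω p.1 p.2)) ^ fib τ p := by
      have hconj : (starRingEnd ℂ) ((M ω).permanent)
          = ∑ σ' : Equiv.Perm (Fin k), ∏ i, (starRingEnd ℂ) (M ω (σ' i) i) := by
        rw [Matrix.permanent, map_sum]
        exact Finset.sum_congr rfl fun σ' _ => map_prod _ _ _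
      rw [hconj, Finset.sum_pow', Fintype.piFinset_univ]
      exact Finset.sum_congr rfl fun τ _ => by
        rw [← prod_fiber_pow τ (fun p => (starRingEnd ℂ) (M ω p.1 p.2))]
    rw [h1, h2, Finset.sum_mul_sum]
    exact Finset.sum_congr rfl fun σ _ => Finset.sum_congr rfl fun τ _ =>
      (Finset.prod_mul_distrib).symm
  -- independence / integrability / integral of each term
  have hterm : ∀ (σ τ : Fin t → Equiv.Perm (Fin k)),
      Integrable (F σ τ) P ∧
      ∫ ω, F σ τ ω ∂P = ((∏ p : Fin k × Fin k,
        if fib σ p = fib τ p then (fib σ p).factorial else 0 : ℕ) : ℂ) := by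
    intro σ τ
    set Y : Fin k × Fin k → Ω → ℂ :=
      fun p ω => (M ω p.1 p.2) ^ fib σ p * ((starRingEnd ℂ) (M ω p.1 p.2)) ^ fib τ p with hY
    have hindY : iIndepFun Y P := by
      exact hind.comp
        (fun p (z : ℂ) => z ^ fib σ p * ((starRingEnd ℂ) z) ^ fib τ p)
        (fun p => (measurable_id.pow_const _).mul (RCLike.continuous_conj.measurable.pow_const _))
    have hmeasY : ∀ p, Measurable (Y p) :=
      fun p => ((hmeas p.1 p.2).pow_const _).mul
        ((RCLike.continuous_conj.measurable.comp (hmeas p.1 p.2)).pow_const _)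
    have hintY : ∀ p, Integrable (Y p) P := fun p => hint p.1 p.2 (fib σ p) (fib τ p)
    obtain ⟨hI, hEq⟩ := integral_prod_complex Y hindY hmeasY hintY Finset.univ
    refine ⟨hI, ?_⟩
    rw [hEq]
    rw [Nat.cast_prod]
    refine Finset.prod_congr rfl fun p _ => ?_
    rw [hmom p.1 p.2 (fib σ p) (fib τ p)]
    split_ifs with h <;> simp
  -- put everything together over ℂ
  have hmain : ∫ ω, ((M ω).permanent) ^ t * ((starRingEnd ℂ) ((M ω).permanent)) ^ t ∂P
      = ((TS k t).card : ℂ) := by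
    calc ∫ ω, ((M ω).permanent) ^ t * ((starRingEnd ℂ) ((M ω).permanent)) ^ t ∂P
        = ∫ ω, ∑ σ : Fin t → Equiv.Perm (Fin k), ∑ τ : Fin t → Equiv.Perm (Fin k), F σ τ ω ∂P :=
          integral_congr_ae (Filter.Eventually.of_forall fun ω => hexp ω)
      _ = ∑ σ : Fin t → Equiv.Perm (Fin k), ∫ ω, ∑ τ : Fin t → Equiv.Perm (Fin k), F σ τ ω ∂P :=
          integral_finset_sum _ fun σ _ =>
            integrable_finset_sum _ fun τ _ => (hterm σ τ).1
      _ = ∑ σ : Fin t → Equiv.Perm (Fin k), ∑ τ : Fin t → Equiv.Perm (Fin k), ∫ ω, F σ τ ω ∂P :=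
          Finset.sum_congr rfl fun σ _ => integral_finset_sum _ fun τ _ => (hterm σ τ).1
      _ = ∑ σ : Fin t → Equiv.Perm (Fin k), ∑ τ : Fin t → Equiv.Perm (Fin k),
            ((∏ p : Fin k × Fin k,
              if fib σ p = fib τ p then (fib σ p).factorial else 0 : ℕ) : ℂ) :=
          Finset.sum_congr rfl fun σ _ => Finset.sum_congr rfl fun τ _ => (hterm σ τ).2
      _ = ((TS k t).card : ℂ) := by
          rw [← sum_eq_ts_card k t]
          push_cast
          rfl
  have h2 : ∫ ω, ((‖(M ω).permanent‖ ^ (2*t) : ℝ) : ℂ) ∂P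
      = ((TS k t).card : ℂ) := by
    rw [← hmain]
    exact integral_congr_ae (Filter.Eventually.of_forall fun ω => hcast _)
  have h3 := _root_.integral_ofReal (𝕜 := ℂ) (μ := P)
    (f := fun ω => ‖(M ω).permanent‖ ^ (2*t))
  have h4 : ((∫ ω, ‖(M ω).permanent‖ ^ (2*t) ∂P : ℝ) : ℂ)
      = (((TS k t).card : ℝ) : ℂ) :=
    h3.symm.trans (h2.trans (Complex.ofReal_natCast _).symm)
  exact Complex.ofReal_injective h4

end Moment

end GaussPermAux


/-- Moment-size duality: the `2t`-th moment of the permanent of a random `k × k`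
complex Gaussian matrix equals the `2k`-th moment of the permanent of a random `t × t`
complex Gaussian matrix. -/
theorem gaussian_permanent_moment_size_duality
    {Ω₁ : Type*} [MeasurableSpace Ω₁] (P₁ : Measure Ω₁) [IsProbabilityMeasure P₁]
    {Ω₂ : Type*} [MeasurableSpace Ω₂] (P₂ : Measure Ω₂) [IsProbabilityMeasure P₂]
    (k t : ℕ)
    (M : Ω₁ → Matrix (Fin k) (Fin k) ℂ) (hM : IsIIDStdComplexGaussianMatrix P₁ M)
    (N : Ω₂ → Matrix (Fin t) (Fin t) ℂ) (hN : IsIIDStdComplexGaussianMatrix P₂ N) :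
    ∫ ω, ‖(M ω).permanent‖ ^ (2*t) ∂P₁
      = ∫ ω, ‖(N ω).permanent‖ ^ (2*k) ∂P₂ := by
  rw [GaussPermAux.moment_eq P₁ k t M hM, GaussPermAux.moment_eq P₂ t k N hN,
    GaussPermAux.ts_card_symm k t]
end

section
/- For all positive integers k, t, the 2t-th moment of the permanent of a k×k i.i.d. complex Gaussian matrix satisfies E|Perm(M)|^{2t} ≥ (k!)^{2t}·(t!)^{2k}/(kt)!. -/
open MeasureTheory ProbabilityTheory

open Finset


private lemma mono_eq {k : ℕ} (m : Fin k → ℕ) :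
    (∏ j : Fin k, (MvPolynomial.X j : MvPolynomial (Fin k) ℝ) ^ m j)
      = MvPolynomial.monomial (Finsupp.equivFunOnFinite.symm m) 1 := by
  rw [← MvPolynomial.prod_X_pow_eq_monomial]
  refine (Finset.prod_subset (Finset.subset_univ _) fun x _ hx => ?_).symm
  have : m x = 0 := Finsupp.notMem_support_iff.mp hx
  rw [this, pow_zero]

private lemma coeff_term {k : ℕ} (c₀ : Fin k →₀ ℕ) (n : ℕ) (m : Fin k → ℕ) :
    MvPolynomial.coeff c₀ ((n : MvPolynomial (Fin k) ℝ) * ∏ j, MvPolynomial.X j ^ m j)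
      = if Finsupp.equivFunOnFinite.symm m = c₀ then (n : ℝ) else 0 := by
  rw [← map_natCast (MvPolynomial.C (σ := Fin k) (R := ℝ)), MvPolynomial.coeff_C_mul, mono_eq,
    MvPolynomial.coeff_monomial]
  split <;> simp

private lemma const_mem_piAntidiag (k t : ℕ) :
    (fun _ : Fin k => t) ∈ Finset.piAntidiag (univ : Finset (Fin k)) (k * t) := by
  rw [Finset.mem_piAntidiag]
  refine ⟨?_, fun i _ => mem_univ i⟩
  simp [Finset.sum_const, mul_comm]

private lemma curried_sum (k t : ℕ) :
    ∑ g ∈ (Fintype.piFinset fun _ : Fin k => Finset.piAntidiag (univ : Finset (Fin k)) t).filter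
        (fun g => (fun j => ∑ i, g i j) = fun _ => t),
      ∏ i : Fin k, (Nat.multinomial univ (g i) : ℝ)
    = (Nat.multinomial (univ : Finset (Fin k)) (fun _ => t) : ℝ) := by
  classical
  have hpoly : (∏ _i : Fin k, (∑ j, MvPolynomial.X j : MvPolynomial (Fin k) ℝ) ^ t)
      = (∑ j, MvPolynomial.X j : MvPolynomial (Fin k) ℝ) ^ (k * t) := by
    rw [Finset.prod_const, card_univ, Fintype.card_fin, ← pow_mul, mul_comm]
  set c₀ : Fin k →₀ ℕ := Finsupp.equivFunOnFinite.symm (fun _ => t) with hc₀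
  have h1 : MvPolynomial.coeff c₀ ((∑ j, MvPolynomial.X j : MvPolynomial (Fin k) ℝ) ^ (k * t))
      = (Nat.multinomial (univ : Finset (Fin k)) (fun _ => t) : ℝ) := by
    rw [Finset.sum_pow_eq_sum_piAntidiag, MvPolynomial.coeff_sum]
    rw [Finset.sum_eq_single (fun _ : Fin k => t)]
    · rw [coeff_term, if_pos rfl]
    · intro c _ hne
      rw [coeff_term, if_neg]
      exact fun h => hne (Finsupp.equivFunOnFinite.symm.injective h)
    · exact fun h => absurd (const_mem_piAntidiag k t) h
  have h2 : MvPolynomial.coeff c₀ (∏ _i : Fin k, (∑ j, MvPolynomial.X j : MvPolynomial (Fin k) ℝ) ^ t)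
      = ∑ g ∈ (Fintype.piFinset fun _ : Fin k => Finset.piAntidiag (univ : Finset (Fin k)) t).filter
          (fun g => (fun j => ∑ i, g i j) = fun _ => t),
        ∏ i : Fin k, (Nat.multinomial univ (g i) : ℝ) := by
    rw [Finset.sum_pow_eq_sum_piAntidiag, Finset.prod_univ_sum]
    have hterm : ∀ g : Fin k → Fin k → ℕ,
        (∏ i : Fin k, ((Nat.multinomial univ (g i) : MvPolynomial (Fin k) ℝ)
            * ∏ j, MvPolynomial.X j ^ g i j))
        = ((∏ i, Nat.multinomial univ (g i) : ℕ) : MvPolynomial (Fin k) ℝ)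
            * ∏ j, MvPolynomial.X j ^ (∑ i, g i j) := by
      intro g
      rw [Finset.prod_mul_distrib, Nat.cast_prod]
      congr 1
      rw [Finset.prod_comm]
      exact Finset.prod_congr rfl fun j _ => Finset.prod_pow_eq_pow_sum _ _ _
    simp_rw [hterm]
    rw [MvPolynomial.coeff_sum]
    have : ∀ g ∈ Fintype.piFinset fun _ : Fin k => Finset.piAntidiag (univ : Finset (Fin k)) t,
        MvPolynomial.coeff c₀ (((∏ i, Nat.multinomial univ (g i) : ℕ) : MvPolynomial (Fin k) ℝ)
            * ∏ j, MvPolynomial.X j ^ (∑ i, g i j))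
        = if (fun j => ∑ i, g i j) = (fun _ => t) then ∏ i : Fin k, (Nat.multinomial univ (g i) : ℝ)
          else 0 := by
      intro g _
      rw [coeff_term, Nat.cast_prod, hc₀]
      exact if_congr Finsupp.equivFunOnFinite.symm.injective.eq_iff rfl rfl
    rw [Finset.sum_congr rfl this]
    exact (Finset.sum_filter _ _).symm
  rw [← h1, ← hpoly, h2]

/-- matrices with all row sums and column sums equal to `t` -/
private def Tmargins (k t : ℕ) : Finset ((Fin k × Fin k) → ℕ) :=
  (Fintype.piFinset fun _ => Finset.range (t+1)).filter
    (fun A => (∀ i, ∑ j, A (i, j) = t) ∧ (∀ j, ∑ i, A (i, j) = t))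

private lemma sum_inv_factorial_eq (k t : ℕ) :
    ∑ A ∈ Tmargins k t, (∏ p : Fin k × Fin k, ((A p).factorial : ℝ))⁻¹
      = ((k*t).factorial : ℝ) / (t.factorial : ℝ)^(2*k) := by
  classical
  have hmult : ∀ (c : Fin k → ℕ), (∑ j, c j = t) →
      (Nat.multinomial (univ : Finset (Fin k)) c : ℝ)
        = (t.factorial : ℝ) * (∏ j, ((c j).factorial : ℝ))⁻¹ := by
    intro c hc
    have hs := Nat.multinomial_spec (univ : Finset (Fin k)) c
    rw [hc] at hs
    have hpos : (0:ℝ) < ∏ j, ((c j).factorial : ℝ) :=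
      Finset.prod_pos fun j _ => by positivity
    field_simp
    rw [mul_comm]
    exact_mod_cast congrArg (Nat.cast : ℕ → ℝ) hs
  have hconst : (Nat.multinomial (univ : Finset (Fin k)) (fun _ => t) : ℝ)
      = ((k*t).factorial : ℝ) / (t.factorial : ℝ)^k := by
    have hs := Nat.multinomial_spec (univ : Finset (Fin k)) (fun _ => t)
    have hsum : ∑ _j : Fin k, t = k * t := by simp [mul_comm]
    rw [hsum] at hs
    have hprod : (∏ _j : Fin k, (t.factorial : ℝ)) = (t.factorial : ℝ)^k := by
      simp [Finset.prod_const]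
    have : ((t.factorial : ℝ))^k * (Nat.multinomial (univ : Finset (Fin k)) (fun _ => t) : ℝ)
        = ((k*t).factorial : ℝ) := by
      rw [← hprod, ← Nat.cast_prod, ← Nat.cast_mul]; exact congrArg (fun n : ℕ => (n : ℝ)) hs
    have hfp : (0:ℝ) < (t.factorial : ℝ)^k := by positivity
    field_simp
    linarith [this]
  have key := curried_sum k t
  -- rewrite the summand of curried_sum
  have hsummand : ∀ g ∈ (Fintype.piFinset fun _ : Fin k => Finset.piAntidiag (univ : Finset (Fin k)) t).filter
        (fun g => (fun j => ∑ i, g i j) = fun _ => t),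
      ∏ i : Fin k, (Nat.multinomial univ (g i) : ℝ)
        = (t.factorial : ℝ)^k * (∏ i, ∏ j, ((g i j).factorial : ℝ))⁻¹ := by
    intro g hg
    rw [Finset.mem_filter] at hg
    have hrow : ∀ i, ∑ j, g i j = t := by
      intro i
      have := (Fintype.mem_piFinset.mp hg.1) i
      exact (Finset.mem_piAntidiag.mp this).1
    calc ∏ i : Fin k, (Nat.multinomial univ (g i) : ℝ)
        = ∏ i : Fin k, ((t.factorial : ℝ) * (∏ j, ((g i j).factorial : ℝ))⁻¹) :=
          Finset.prod_congr rfl fun i _ => hmult (g i) (hrow i)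
      _ = (t.factorial : ℝ)^k * (∏ i, ∏ j, ((g i j).factorial : ℝ))⁻¹ := by
          rw [Finset.prod_mul_distrib, Finset.prod_const, card_univ, Fintype.card_fin,
            ← Finset.prod_inv_distrib]
  rw [Finset.sum_congr rfl hsummand, ← Finset.mul_sum, hconst] at key
  -- transfer to Tmargins via bijection
  have hbij : ∑ A ∈ Tmargins k t, (∏ p : Fin k × Fin k, ((A p).factorial : ℝ))⁻¹
      = ∑ g ∈ (Fintype.piFinset fun _ : Fin k => Finset.piAntidiag (univ : Finset (Fin k)) t).filter
          (fun g => (fun j => ∑ i, g i j) = fun _ => t),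
        (∏ i, ∏ j, ((g i j).factorial : ℝ))⁻¹ := by
    refine Finset.sum_nbij' (fun A => fun i j => A (i, j)) (fun g => fun p => g p.1 p.2) ?_ ?_ ?_ ?_ ?_
    · intro A hA
      rw [Tmargins, Finset.mem_filter] at hA
      rw [Finset.mem_filter]
      refine ⟨Fintype.mem_piFinset.mpr fun i => ?_, funext fun j => hA.2.2 j⟩
      rw [Finset.mem_piAntidiag]
      exact ⟨hA.2.1 i, fun j _ => mem_univ j⟩
    · intro g hg
      rw [Finset.mem_filter] at hg
      have hrow : ∀ i, ∑ j, g i j = t := fun i =>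
        (Finset.mem_piAntidiag.mp ((Fintype.mem_piFinset.mp hg.1) i)).1
      rw [Tmargins, Finset.mem_filter]
      refine ⟨Fintype.mem_piFinset.mpr fun p => ?_, fun i => hrow i, fun j => congrFun hg.2 j⟩
      rw [Finset.mem_range, Nat.lt_succ_iff, ← hrow p.1]
      exact Finset.single_le_sum (fun j _ => Nat.zero_le _) (mem_univ p.2)
    · intro A _; rfl
    · intro g _; rfl
    · intro A _
      congr 1
      exact Fintype.prod_prod_type _
  rw [hbij]
  have hfp : (0:ℝ) < (t.factorial:ℝ)^k := by positivity
  have h2k : (t.factorial:ℝ)^(2*k) = (t.factorial:ℝ)^k * (t.factorial:ℝ)^k := by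
    rw [two_mul, pow_add]
  rw [h2k]
  rw [eq_div_iff (by positivity)]
  rw [eq_div_iff (ne_of_gt hfp)] at key
  linear_combination key

private lemma indepFun_integral_mul_complex {Ω : Type*} [MeasurableSpace Ω] {P : Measure Ω}
    [IsProbabilityMeasure P] {X Y : Ω → ℂ} (h : IndepFun X Y P)
    (hXm : Measurable X) (hYm : Measurable Y)
    (hX : Integrable X P) (hY : Integrable Y P) :
    ∫ ω, X ω * Y ω ∂P = (∫ ω, X ω ∂P) * ∫ ω, Y ω ∂P := by
  have hXY : Integrable (X * Y) P := h.integrable_mul hX hY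
  have hmap : Measure.map (fun ω => (X ω, Y ω)) P
      = (Measure.map X P).prod (Measure.map Y P) :=
    (indepFun_iff_map_prod_eq_prod_map_map hXm.aemeasurable hYm.aemeasurable).mp h
  have hpairm : AEMeasurable (fun ω => (X ω, Y ω)) P := (hXm.prodMk hYm).aemeasurable
  have hfm : AEStronglyMeasurable (fun p : ℂ × ℂ => p.1 * p.2)
      (Measure.map (fun ω => (X ω, Y ω)) P) :=
    (measurable_fst.mul measurable_snd).aestronglyMeasurable
  have h1 : ∫ ω, X ω * Y ω ∂P
      = ∫ p : ℂ × ℂ, p.1 * p.2 ∂(Measure.map (fun ω => (X ω, Y ω)) P) :=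
    (integral_map hpairm hfm).symm
  have hint2 : Integrable (fun p : ℂ × ℂ => p.1 * p.2)
      ((Measure.map X P).prod (Measure.map Y P)) := by
    rw [← hmap, integrable_map_measure hfm hpairm]
    exact hXY
  haveI : IsProbabilityMeasure (Measure.map X P) :=
    Measure.isProbabilityMeasure_map hXm.aemeasurable
  haveI : IsProbabilityMeasure (Measure.map Y P) :=
    Measure.isProbabilityMeasure_map hYm.aemeasurable
  rw [h1, hmap, MeasureTheory.integral_prod _ hint2]
  have hinner : ∀ x : ℂ, (∫ y, x * y ∂(Measure.map Y P)) = x * ∫ y, y ∂(Measure.map Y P) :=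
    fun x => integral_const_mul x _
  rw [integral_congr_ae (Filter.Eventually.of_forall hinner)]
  have houter : (∫ x, x * (∫ y, y ∂(Measure.map Y P)) ∂(Measure.map X P))
      = (∫ x, x ∂(Measure.map X P)) * ∫ y, y ∂(Measure.map Y P) := by
    simp_rw [← smul_eq_mul]
    exact integral_smul_const (fun x : ℂ => x) _
  rw [houter]
  congr 1
  · exact integral_map hXm.aemeasurable aestronglyMeasurable_id
  · exact integral_map hYm.aemeasurable aestronglyMeasurable_id

private lemma integral_prod_of_iIndep {Ω ι : Type*} [MeasurableSpace Ω] {P : Measure Ω}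
    [IsProbabilityMeasure P] {f : ι → Ω → ℂ}
    (hindep : iIndepFun f P)
    (hmeas : ∀ i, Measurable (f i)) (hint : ∀ i, Integrable (f i) P) (s : Finset ι) :
    Integrable (fun ω => ∏ i ∈ s, f i ω) P ∧
      (∫ ω, ∏ i ∈ s, f i ω ∂P) = ∏ i ∈ s, ∫ ω, f i ω ∂P := by
  classical
  induction s using Finset.cons_induction with
  | empty => simp
  | cons a s ha ih =>
    have hprodmeas : Measurable (fun ω => ∏ i ∈ s, f i ω) :=
      Finset.measurable_prod s fun i _ => hmeas i
    have hind : IndepFun (f a) (fun ω => ∏ i ∈ s, f i ω) P := by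
      have h := hindep.indepFun_finsetProd_of_notMem hmeas ha
      have hprod : (∏ i ∈ s, f i) = (fun ω => ∏ i ∈ s, f i ω) := by
        funext ω; rw [Finset.prod_apply]
      rw [hprod] at h
      exact h.symm
    have h1 : Integrable (fun ω => f a ω * ∏ i ∈ s, f i ω) P := by
      have := hind.integrable_mul (hint a) ih.1
      have hmul : (f a * fun ω => ∏ i ∈ s, f i ω) = (fun ω => f a ω * ∏ i ∈ s, f i ω) := rfl
      rwa [hmul] at this
    have h2 : (∫ ω, f a ω * ∏ i ∈ s, f i ω ∂P)
        = (∫ ω, f a ω ∂P) * ∫ ω, ∏ i ∈ s, f i ω ∂P :=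
      indepFun_integral_mul_complex hind (hmeas a) hprodmeas (hint a) ih.1
    constructor
    · simp only [Finset.prod_cons]
      exact h1
    · simp only [Finset.prod_cons]
      rw [show (∫ ω, f a ω * ∏ i ∈ s, f i ω ∂P)
          = (∫ ω, f a ω ∂P) * ∫ ω, ∏ i ∈ s, f i ω ∂P from h2, ih.2]

private def Amat {k t : ℕ} (π : Fin t → Equiv.Perm (Fin k)) : Fin k × Fin k → ℕ :=
  fun p => (Finset.univ.filter fun s : Fin t => π s p.2 = p.1).card

private lemma Amat_le {k t : ℕ} (π : Fin t → Equiv.Perm (Fin k)) (p : Fin k × Fin k) :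
    Amat π p ≤ t := by
  classical
  calc Amat π p ≤ (Finset.univ : Finset (Fin t)).card := Finset.card_filter_le _ _
    _ = t := by simp

private lemma Amat_row_sum {k t : ℕ} (π : Fin t → Equiv.Perm (Fin k)) (r : Fin k) :
    ∑ c : Fin k, Amat π (r, c) = t := by
  classical
  simp only [Amat, Finset.card_filter]
  rw [Finset.sum_comm]
  have h : ∀ s : Fin t, (∑ c : Fin k, if π s c = r then (1:ℕ) else 0) = 1 := by
    intro s
    simp only [Equiv.apply_eq_iff_eq_symm_apply]
    rw [Finset.sum_ite_eq' Finset.univ ((π s).symm r) (fun _ => (1:ℕ))]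
    simp
  simp [h]

private lemma Amat_col_sum {k t : ℕ} (π : Fin t → Equiv.Perm (Fin k)) (c : Fin k) :
    ∑ r : Fin k, Amat π (r, c) = t := by
  classical
  simp only [Amat, Finset.card_filter]
  rw [Finset.sum_comm]
  have h : ∀ s : Fin t, (∑ r : Fin k, if π s c = r then (1:ℕ) else 0) = 1 := by
    intro s
    rw [Finset.sum_ite_eq Finset.univ (π s c) (fun _ => (1:ℕ))]
    simp
  simp [h]

private lemma permanent_pow_eq {k t : ℕ} (N : Matrix (Fin k) (Fin k) ℂ) :
    N.permanent ^ t
      = ∑ π : Fin t → Equiv.Perm (Fin k), ∏ p : Fin k × Fin k, N p.1 p.2 ^ Amat π p := by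
  classical
  have h1 : N.permanent ^ t
      = ∏ _s : Fin t, ∑ σ : Equiv.Perm (Fin k), ∏ i, N (σ i) i := by
    rw [Finset.prod_const, Matrix.permanent]
    simp
  rw [h1, Finset.prod_univ_sum]
  rw [Fintype.piFinset_univ]
  refine Finset.sum_congr rfl fun π _ => ?_
  rw [← Fintype.prod_prod_type' (fun s i => N (π s i) i)]
  rw [← Finset.prod_fiberwise_of_maps_to
    (g := fun q : Fin t × Fin k => ((π q.1 q.2, q.2) : Fin k × Fin k))
    (fun q _ => Finset.mem_univ ((π q.1 q.2, q.2) : Fin k × Fin k))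
    (fun q : Fin t × Fin k => N (π q.1 q.2) q.2)]
  refine Finset.prod_congr rfl fun p _ => ?_
  have hconst : ∀ q ∈ Finset.univ.filter (fun q : Fin t × Fin k => (π q.1 q.2, q.2) = p),
      N (π q.1 q.2) q.2 = N p.1 p.2 := by
    intro q hq
    obtain ⟨-, hq⟩ := Finset.mem_filter.mp hq
    rw [← hq]
  rw [Finset.prod_congr rfl hconst, Finset.prod_const]
  congr 1
  rw [Amat]
  apply Finset.card_bij (fun (q : Fin t × Fin k) _ => q.1)
  · intro q hq
    obtain ⟨-, hq⟩ := Finset.mem_filter.mp hq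
    rw [Finset.mem_filter]
    refine ⟨Finset.mem_univ _, ?_⟩
    have h2 : q.2 = p.2 := congrArg Prod.snd hq
    have h1' : π q.1 q.2 = p.1 := congrArg Prod.fst hq
    rw [← h2]; exact h1'
  · intro q hq q' hq' hqq
    obtain ⟨-, hq⟩ := Finset.mem_filter.mp hq
    obtain ⟨-, hq'⟩ := Finset.mem_filter.mp hq'
    have h2 : q.2 = p.2 := congrArg Prod.snd hq
    have h2' : q'.2 = p.2 := congrArg Prod.snd hq'
    exact Prod.ext hqq (h2.trans h2'.symm)
  · intro s hs
    obtain ⟨-, hs⟩ := Finset.mem_filter.mp hs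
    refine ⟨(s, p.2), ?_, rfl⟩
    rw [Finset.mem_filter]
    exact ⟨Finset.mem_univ _, by simp [hs]⟩

private lemma conj_permanent_pow_eq {k t : ℕ} (N : Matrix (Fin k) (Fin k) ℂ) :
    (starRingEnd ℂ) N.permanent ^ t
      = ∑ π : Fin t → Equiv.Perm (Fin k),
          ∏ p : Fin k × Fin k, (starRingEnd ℂ) (N p.1 p.2) ^ Amat π p := by
  rw [← map_pow, permanent_pow_eq, map_sum]
  refine Finset.sum_congr rfl fun π _ => ?_
  rw [map_prod]
  exact Finset.prod_congr rfl fun p _ => by rw [map_pow]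

private lemma abs_pow_eq (z : ℂ) (t : ℕ) :
    ((‖z‖ ^ (2*t) : ℝ) : ℂ) = z ^ t * (starRingEnd ℂ) z ^ t := by
  rw [← mul_pow, Complex.mul_conj, pow_mul, Complex.sq_norm]
  push_cast
  ring

private lemma prod_ite_factorial {k : ℕ} (a b : (Fin k × Fin k) → ℕ) :
    (∏ p : Fin k × Fin k, if a p = b p then ((a p).factorial : ℝ) else 0)
      = if a = b then ∏ p : Fin k × Fin k, ((a p).factorial : ℝ) else 0 := by
  classical
  by_cases h : a = b
  · subst h; simp
  · rw [if_neg h]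
    obtain ⟨p, hp⟩ := Function.ne_iff.mp h
    exact Finset.prod_eq_zero (Finset.mem_univ p) (if_neg hp)


set_option maxHeartbeats 1000000 in
/-- For all positive integers `k, t`, the `2t`-th moment of the permanent of a `k × k`
i.i.d. complex Gaussian matrix is at least `(k!)^(2t) * (t!)^(2k) / (kt)!`. -/
theorem gaussian_permanent_moment_lower_bound {Ω : Type*} [MeasurableSpace Ω]
    (P : Measure Ω) [IsProbabilityMeasure P] (k t : ℕ) (hk : 0 < k) (ht : 0 < t)
    (M : Ω → Matrix (Fin k) (Fin k) ℂ)
    (hM : IsIIDStdComplexGaussianMatrix P M) :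
    ((k.factorial : ℝ) ^ (2*t) * (t.factorial : ℝ) ^ (2*k)) / ((k*t).factorial : ℝ)
      ≤ ∫ ω, ‖(M ω).permanent‖ ^ (2*t) ∂P := by
  classical
  obtain ⟨hmeas, hindep, hint, hmom⟩ := hM
  -- the integral of a product of entry powers
  have hGkey : ∀ a b : (Fin k × Fin k) → ℕ,
      Integrable (fun ω => ∏ p : Fin k × Fin k,
          (M ω p.1 p.2 ^ a p * (starRingEnd ℂ) (M ω p.1 p.2) ^ b p)) P ∧
      (∫ ω, ∏ p : Fin k × Fin k,
          (M ω p.1 p.2 ^ a p * (starRingEnd ℂ) (M ω p.1 p.2) ^ b p) ∂P)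
        = ∏ p : Fin k × Fin k, (if a p = b p then ((a p).factorial : ℂ) else 0) := by
    intro a b
    have hφmeas : ∀ p : Fin k × Fin k,
        Measurable (fun z : ℂ => z ^ a p * (starRingEnd ℂ) z ^ b p) := by
      intro p
      exact (measurable_id.pow_const (a p)).mul
        ((RCLike.continuous_conj (K := ℂ)).measurable.pow_const (b p))
    have hind : iIndepFun
        (fun p : Fin k × Fin k => fun ω =>
          M ω p.1 p.2 ^ a p * (starRingEnd ℂ) (M ω p.1 p.2) ^ b p) P :=
      hindep.comp (fun p => fun z : ℂ => z ^ a p * (starRingEnd ℂ) z ^ b p) hφmeas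
    have hm : ∀ p : Fin k × Fin k, Measurable (fun ω =>
        M ω p.1 p.2 ^ a p * (starRingEnd ℂ) (M ω p.1 p.2) ^ b p) :=
      fun p => (hφmeas p).comp (hmeas p.1 p.2)
    have hi : ∀ p : Fin k × Fin k, Integrable (fun ω =>
        M ω p.1 p.2 ^ a p * (starRingEnd ℂ) (M ω p.1 p.2) ^ b p) P :=
      fun p => hint p.1 p.2 (a p) (b p)
    obtain ⟨hI, hE⟩ := integral_prod_of_iIndep hind hm hi Finset.univ
    refine ⟨hI, hE.trans ?_⟩
    exact Finset.prod_congr rfl fun p _ => hmom p.1 p.2 (a p) (b p)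
  -- pointwise expansion
  have hexp : ∀ ω, ((‖(M ω).permanent‖ ^ (2*t) : ℝ) : ℂ)
      = ∑ q : (Fin t → Equiv.Perm (Fin k)) × (Fin t → Equiv.Perm (Fin k)),
          ∏ p : Fin k × Fin k,
            (M ω p.1 p.2 ^ Amat q.1 p * (starRingEnd ℂ) (M ω p.1 p.2) ^ Amat q.2 p) := by
    intro ω
    rw [abs_pow_eq, permanent_pow_eq, conj_permanent_pow_eq, Finset.sum_mul_sum,
      Fintype.sum_prod_type]
    exact Finset.sum_congr rfl fun π _ => Finset.sum_congr rfl fun σ _ =>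
      (Finset.prod_mul_distrib).symm
  -- the value of the integral, as a complex number
  have hofReal : ((∫ ω, ‖(M ω).permanent‖ ^ (2*t) ∂P : ℝ) : ℂ)
      = ∑ q : (Fin t → Equiv.Perm (Fin k)) × (Fin t → Equiv.Perm (Fin k)),
          ∏ p : Fin k × Fin k,
            (if Amat q.1 p = Amat q.2 p then ((Amat q.1 p).factorial : ℂ) else 0) := by
    rw [show ((∫ ω, ‖(M ω).permanent‖ ^ (2*t) ∂P : ℝ) : ℂ)
        = ∫ ω, ((‖(M ω).permanent‖ ^ (2*t) : ℝ) : ℂ) ∂P from (integral_ofReal).symm]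
    calc (∫ ω, ((‖(M ω).permanent‖ ^ (2*t) : ℝ) : ℂ) ∂P)
        = ∫ ω, ∑ q : (Fin t → Equiv.Perm (Fin k)) × (Fin t → Equiv.Perm (Fin k)),
            ∏ p : Fin k × Fin k,
              (M ω p.1 p.2 ^ Amat q.1 p * (starRingEnd ℂ) (M ω p.1 p.2) ^ Amat q.2 p) ∂P := by
          exact integral_congr_ae (Filter.Eventually.of_forall fun ω => hexp ω)
      _ = ∑ q : (Fin t → Equiv.Perm (Fin k)) × (Fin t → Equiv.Perm (Fin k)),
            ∫ ω, ∏ p : Fin k × Fin k,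
              (M ω p.1 p.2 ^ Amat q.1 p * (starRingEnd ℂ) (M ω p.1 p.2) ^ Amat q.2 p) ∂P :=
          integral_finset_sum _ (fun q _ => (hGkey (Amat q.1) (Amat q.2)).1)
      _ = _ := Finset.sum_congr rfl fun q _ => (hGkey (Amat q.1) (Amat q.2)).2
  -- real form
  set S : ℝ := ∑ q : (Fin t → Equiv.Perm (Fin k)) × (Fin t → Equiv.Perm (Fin k)),
      ∏ p : Fin k × Fin k,
        (if Amat q.1 p = Amat q.2 p then ((Amat q.1 p).factorial : ℝ) else 0) with hSdef
  have hint_eq : (∫ ω, ‖(M ω).permanent‖ ^ (2*t) ∂P) = S := by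
    apply Complex.ofReal_injective
    rw [hofReal, hSdef]
    push_cast [apply_ite (fun x : ℝ => (x : ℂ))]
    rfl
  rw [hint_eq]
  -- now the purely combinatorial estimate
  set w : ((Fin k × Fin k) → ℕ) → ℝ := fun A => ∏ p : Fin k × Fin k, ((A p).factorial : ℝ)
    with hwdef
  have hw_pos : ∀ A, 0 < w A := fun A => Finset.prod_pos fun p _ => by positivity
  set T : Finset ((Fin k × Fin k) → ℕ) :=
    Finset.univ.image (Amat (k := k) (t := t)) with hTdef
  set Nc : ((Fin k × Fin k) → ℕ) → ℕ :=
    fun A => (Finset.univ.filter fun π : Fin t → Equiv.Perm (Fin k) => Amat π = A).card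
    with hNcdef
  have hS : S = ∑ A ∈ T, (Nc A : ℝ)^2 * w A := by
    rw [hSdef, Fintype.sum_prod_type]
    have hinner : ∀ π : Fin t → Equiv.Perm (Fin k),
        (∑ σ : Fin t → Equiv.Perm (Fin k), ∏ p : Fin k × Fin k,
          (if Amat π p = Amat σ p then ((Amat π p).factorial : ℝ) else 0))
        = (Nc (Amat π) : ℝ) * w (Amat π) := by
      intro π
      have h1 : ∀ σ : Fin t → Equiv.Perm (Fin k),
          (∏ p : Fin k × Fin k,
            (if Amat π p = Amat σ p then ((Amat π p).factorial : ℝ) else 0))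
          = if Amat π = Amat σ then w (Amat π) else 0 := fun σ => prod_ite_factorial _ _
      rw [Finset.sum_congr rfl fun σ _ => h1 σ]
      rw [Finset.sum_ite, Finset.sum_const_zero, add_zero, Finset.sum_const, nsmul_eq_mul]
      congr 2
      rw [hNcdef]
      congr 1
      exact Finset.filter_congr fun σ _ => by rw [eq_comm]
    rw [Finset.sum_congr rfl fun π _ => hinner π]
    rw [Finset.sum_comp (fun A => (Nc A : ℝ) * w A) (Amat (k := k) (t := t))]
    rw [← hTdef]
    refine Finset.sum_congr rfl fun A _ => ?_
    have hfilt : (Finset.univ.filter fun a : Fin t → Equiv.Perm (Fin k) => Amat a = A).card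
        = Nc A := rfl
    rw [hfilt, nsmul_eq_mul]
    ring
  have hcardsum : ∑ A ∈ T, (Nc A : ℝ) = ((k.factorial : ℝ))^t := by
    have h1 : ∑ A ∈ T, Nc A = (Finset.univ : Finset (Fin t → Equiv.Perm (Fin k))).card := by
      rw [hTdef, hNcdef]
      exact (Finset.card_eq_sum_card_image _ _).symm
    have h2 : (Finset.univ : Finset (Fin t → Equiv.Perm (Fin k))).card = (k.factorial)^t := by
      rw [Finset.card_univ, Fintype.card_fun, Fintype.card_perm, Fintype.card_fin, Fintype.card_fin]
    rw [← Nat.cast_sum, h1, h2]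
    push_cast
    ring
  have hsubset : T ⊆ Tmargins k t := by
    intro A hA
    obtain ⟨π, -, rfl⟩ := Finset.mem_image.mp hA
    rw [Tmargins, Finset.mem_filter]
    refine ⟨Fintype.mem_piFinset.mpr fun p => ?_,
      fun i => Amat_row_sum π i, fun j => Amat_col_sum π j⟩
    rw [Finset.mem_range, Nat.lt_succ_iff]
    exact Amat_le π p
  have hQ : ∑ A ∈ T, (w A)⁻¹ ≤ ((k*t).factorial : ℝ)/(t.factorial : ℝ)^(2*k) := by
    rw [← sum_inv_factorial_eq k t]
    refine Finset.sum_le_sum_of_subset_of_nonneg hsubset (fun A _ _ => ?_)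
    rw [hwdef]
    positivity
  have hCS : ((k.factorial : ℝ)^t)^2 ≤ S * (∑ A ∈ T, (w A)⁻¹) := by
    have h := Finset.sum_mul_sq_le_sq_mul_sq T
      (fun A => (Nc A : ℝ) * Real.sqrt (w A)) (fun A => (Real.sqrt (w A))⁻¹)
    have h1 : ∀ A ∈ T, ((Nc A : ℝ) * Real.sqrt (w A)) * (Real.sqrt (w A))⁻¹ = (Nc A : ℝ) := by
      intro A _
      have : Real.sqrt (w A) ≠ 0 := ne_of_gt (Real.sqrt_pos.mpr (hw_pos A))
      field_simp
    have h2 : ∀ A ∈ T, ((Nc A : ℝ) * Real.sqrt (w A))^2 = (Nc A : ℝ)^2 * w A := by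
      intro A _
      rw [mul_pow, Real.sq_sqrt (le_of_lt (hw_pos A))]
    have h3 : ∀ A ∈ T, ((Real.sqrt (w A))⁻¹)^2 = (w A)⁻¹ := by
      intro A _
      rw [inv_pow, Real.sq_sqrt (le_of_lt (hw_pos A))]
    rw [Finset.sum_congr rfl h1, Finset.sum_congr rfl h2, Finset.sum_congr rfl h3] at h
    rw [hcardsum] at h
    rw [hS]
    exact h
  have hS_nonneg : 0 ≤ S := by
    rw [hS]
    exact Finset.sum_nonneg fun A _ => mul_nonneg (sq_nonneg _) (le_of_lt (hw_pos A))
  have hfinal : ((k.factorial : ℝ)^t)^2 ≤ S * (((k*t).factorial : ℝ)/(t.factorial : ℝ)^(2*k)) :=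
    hCS.trans (mul_le_mul_of_nonneg_left hQ hS_nonneg)
  have hc_pos : (0:ℝ) < ((k*t).factorial : ℝ) := by positivity
  have hb_pos : (0:ℝ) < (t.factorial : ℝ)^(2*k) := by positivity
  rw [div_le_iff₀ hc_pos]
  have hpow : ((k.factorial : ℝ)^t)^2 = (k.factorial : ℝ)^(2*t) := by
    rw [← pow_mul, mul_comm]
  rw [hpow] at hfinal
  have h5 : (k.factorial : ℝ)^(2*t) * (t.factorial : ℝ)^(2*k)
      ≤ (S * (((k*t).factorial : ℝ)/(t.factorial : ℝ)^(2*k))) * (t.factorial : ℝ)^(2*k) :=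
    mul_le_mul_of_nonneg_right hfinal (le_of_lt hb_pos)
  calc (k.factorial : ℝ)^(2*t) * (t.factorial : ℝ)^(2*k)
      ≤ (S * (((k*t).factorial : ℝ)/(t.factorial : ℝ)^(2*k))) * (t.factorial : ℝ)^(2*k) := h5
    _ = S * ((k*t).factorial : ℝ) := by
        field_simp
end

section
/- For a random k×k matrix M with i.i.d. standard complex Gaussian entries, E|det(M)|^{2t} ≤ E|Perm(M)|^{2t} for every positive integer t. -/
open MeasureTheory ProbabilityTheory

lemma aux_integral_mul {Ω : Type*} {mΩ : MeasurableSpace Ω} {μ : Measure Ω}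
    [IsProbabilityMeasure μ] {X Y : Ω → ℂ} (h : IndepFun X Y μ)
    (hXm : Measurable X) (hYm : Measurable Y) :
    ∫ ω, X ω * Y ω ∂μ = (∫ ω, X ω ∂μ) * ∫ ω, Y ω ∂μ := by
  have hmap := (indepFun_iff_map_prod_eq_prod_map_map hXm.aemeasurable hYm.aemeasurable).mp h
  haveI : IsProbabilityMeasure (μ.map X) := Measure.isProbabilityMeasure_map hXm.aemeasurable
  haveI : IsProbabilityMeasure (μ.map Y) := Measure.isProbabilityMeasure_map hYm.aemeasurable
  calc ∫ ω, X ω * Y ω ∂μ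
      = ∫ z : ℂ × ℂ, z.1 * z.2 ∂(μ.map fun ω => (X ω, Y ω)) := by
        rw [integral_map (f := fun z : ℂ × ℂ => z.1 * z.2) (hXm.prodMk hYm).aemeasurable
          (measurable_fst.mul measurable_snd).aestronglyMeasurable]
    _ = ∫ z : ℂ × ℂ, z.1 * z.2 ∂((μ.map X).prod (μ.map Y)) := by rw [hmap]
    _ = (∫ z, z ∂(μ.map X)) * ∫ z, z ∂(μ.map Y) := integral_prod_mul (fun z => z) (fun z => z)
    _ = (∫ ω, X ω ∂μ) * ∫ ω, Y ω ∂μ := by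
        rw [integral_map (f := fun z : ℂ => z) hXm.aemeasurable aestronglyMeasurable_id,
          integral_map (f := fun z : ℂ => z) hYm.aemeasurable aestronglyMeasurable_id]

lemma aux_integrable_prod {Ω ι : Type*} {mΩ : MeasurableSpace Ω} {μ : Measure Ω}
    [IsProbabilityMeasure μ] {X : ι → Ω → ℂ}
    (hind : iIndepFun X μ) (hmeas : ∀ i, Measurable (X i))
    (hint : ∀ i, Integrable (X i) μ) (s : Finset ι) :
    Integrable (fun ω => ∏ i ∈ s, X i ω) μ := by
  classical
  induction s using Finset.induction_on with
  | empty => simpa using integrable_const (1 : ℂ)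
  | @insert i s hi ih =>
      have h := (hind.indepFun_finsetProd_of_notMem hmeas hi).symm
      rw [Finset.prod_fn] at h
      have := h.integrable_mul (hint i) ih
      simpa [Finset.prod_insert hi, Pi.mul_def] using this

lemma aux_integral_prod {Ω ι : Type*} {mΩ : MeasurableSpace Ω} {μ : Measure Ω}
    [IsProbabilityMeasure μ] {X : ι → Ω → ℂ}
    (hind : iIndepFun X μ) (hmeas : ∀ i, Measurable (X i))
    (s : Finset ι) :
    ∫ ω, ∏ i ∈ s, X i ω ∂μ = ∏ i ∈ s, ∫ ω, X i ω ∂μ := by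
  classical
  induction s using Finset.induction_on with
  | empty => simp
  | @insert i s hi ih =>
      have h := (hind.indepFun_finsetProd_of_notMem hmeas hi).symm
      rw [Finset.prod_fn] at h
      have hm : Measurable (fun ω => ∏ j ∈ s, X j ω) :=
        Finset.measurable_prod s fun j _ => hmeas j
      simp_rw [Finset.prod_insert hi]
      rw [aux_integral_mul h (hmeas i) hm, ih]

/-- The multiplicity with which the matrix entry `p` appears in the product of the
permutation monomials indexed by `σ`. -/
def expcnt {k t : ℕ} (σ : Fin t → Equiv.Perm (Fin k)) (p : Fin k × Fin k) : ℕ :=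
  (Finset.univ.filter fun j => σ j p.2 = p.1).card

lemma aux_regroup {k t : ℕ} (f : Fin k × Fin k → ℂ) (σ : Fin t → Equiv.Perm (Fin k)) :
    ∏ j : Fin t, ∏ i : Fin k, f (σ j i, i)
      = ∏ p : Fin k × Fin k, f p ^ expcnt σ p := by
  classical
  calc ∏ j : Fin t, ∏ i : Fin k, f (σ j i, i)
      = ∏ i : Fin k, ∏ j : Fin t, f (σ j i, i) := Finset.prod_comm
    _ = ∏ i : Fin k, ∏ r : Fin k,
          f (r, i) ^ (Finset.univ.filter fun j => σ j i = r).card := by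
        refine Finset.prod_congr rfl fun i _ => ?_
        calc ∏ j : Fin t, f (σ j i, i)
            = ∏ r : Fin k, ∏ j ∈ Finset.univ.filter fun j => σ j i = r, f (σ j i, i) :=
              (Finset.prod_fiberwise_of_maps_to (fun j _ => Finset.mem_univ (σ j i)) _).symm
          _ = ∏ r : Fin k, f (r, i) ^ (Finset.univ.filter fun j => σ j i = r).card := by
              refine Finset.prod_congr rfl fun r _ => ?_
              rw [← Finset.prod_const]
              refine Finset.prod_congr rfl fun j hj => ?_
              rw [(Finset.mem_filter.mp hj).2]
    _ = ∏ r : Fin k, ∏ i : Fin k,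
          f (r, i) ^ (Finset.univ.filter fun j => σ j i = r).card := Finset.prod_comm
    _ = ∏ p : Fin k × Fin k, f p ^ expcnt σ p :=
        (Fintype.prod_prod_type (f := fun p : Fin k × Fin k => f p ^ expcnt σ p)).symm

lemma aux_det_pow {k t : ℕ} (A : Matrix (Fin k) (Fin k) ℂ) :
    A.det ^ t = ∑ σ : Fin t → Equiv.Perm (Fin k),
      (∏ j, ((Equiv.Perm.sign (σ j) : ℤ) : ℂ)) * ∏ p : Fin k × Fin k, A p.1 p.2 ^ expcnt σ p := by
  classical
  have h1 : A.det ^ t = ∏ _j : Fin t, A.det := by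
    rw [Finset.prod_const, Finset.card_univ, Fintype.card_fin]
  rw [h1]
  simp_rw [Matrix.det_apply']
  rw [Finset.prod_univ_sum, Fintype.piFinset_univ]
  refine Finset.sum_congr rfl fun σ _ => ?_
  rw [Finset.prod_mul_distrib, ← aux_regroup (fun p => A p.1 p.2) σ]

lemma aux_perm_pow {k t : ℕ} (A : Matrix (Fin k) (Fin k) ℂ) :
    A.permanent ^ t = ∑ σ : Fin t → Equiv.Perm (Fin k),
      ∏ p : Fin k × Fin k, A p.1 p.2 ^ expcnt σ p := by
  classical
  have h1 : A.permanent ^ t = ∏ _j : Fin t, A.permanent := by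
    rw [Finset.prod_const, Finset.card_univ, Fintype.card_fin]
  rw [h1]
  simp_rw [Matrix.permanent]
  rw [Finset.prod_univ_sum, Fintype.piFinset_univ]
  refine Finset.sum_congr rfl fun σ _ => ?_
  rw [← aux_regroup (fun p => A p.1 p.2) σ]

lemma aux_abspow (z : ℂ) (t : ℕ) :
    ((‖z‖ ^ (2 * t) : ℝ) : ℂ) = z ^ t * (starRingEnd ℂ) z ^ t := by
  rw [pow_mul, Complex.ofReal_pow, Complex.sq_norm, ← Complex.mul_conj, mul_pow]

lemma aux_det_key {k t : ℕ} (A : Matrix (Fin k) (Fin k) ℂ) :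
    ((‖A.det‖ ^ (2 * t) : ℝ) : ℂ)
      = ∑ σ : Fin t → Equiv.Perm (Fin k), ∑ τ : Fin t → Equiv.Perm (Fin k),
          (∏ j, ((Equiv.Perm.sign (σ j) : ℤ) : ℂ)) * (∏ j, ((Equiv.Perm.sign (τ j) : ℤ) : ℂ)) *
            ∏ p : Fin k × Fin k,
              (A p.1 p.2 ^ expcnt σ p * (starRingEnd ℂ) (A p.1 p.2) ^ expcnt τ p) := by
  have h2 : (starRingEnd ℂ) A.det ^ t = ∑ τ : Fin t → Equiv.Perm (Fin k),
      (∏ j, ((Equiv.Perm.sign (τ j) : ℤ) : ℂ)) *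
        ∏ p : Fin k × Fin k, ((starRingEnd ℂ) (A p.1 p.2)) ^ expcnt τ p := by
    rw [← map_pow, aux_det_pow, map_sum]
    refine Finset.sum_congr rfl fun τ _ => ?_
    rw [map_mul, map_prod, map_prod]
    congr 1
    · exact Finset.prod_congr rfl fun j _ => by simp
    · exact Finset.prod_congr rfl fun p _ => by rw [map_pow]
  rw [aux_abspow, aux_det_pow, h2, Finset.sum_mul_sum]
  refine Finset.sum_congr rfl fun σ _ => Finset.sum_congr rfl fun τ _ => ?_
  rw [Finset.prod_mul_distrib]
  ring

lemma aux_perm_key {k t : ℕ} (A : Matrix (Fin k) (Fin k) ℂ) :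
    ((‖A.permanent‖ ^ (2 * t) : ℝ) : ℂ)
      = ∑ σ : Fin t → Equiv.Perm (Fin k), ∑ τ : Fin t → Equiv.Perm (Fin k),
          ∏ p : Fin k × Fin k,
            (A p.1 p.2 ^ expcnt σ p * (starRingEnd ℂ) (A p.1 p.2) ^ expcnt τ p) := by
  have h2 : (starRingEnd ℂ) A.permanent ^ t = ∑ τ : Fin t → Equiv.Perm (Fin k),
      ∏ p : Fin k × Fin k, ((starRingEnd ℂ) (A p.1 p.2)) ^ expcnt τ p := by
    rw [← map_pow, aux_perm_pow, map_sum]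
    refine Finset.sum_congr rfl fun τ _ => ?_
    rw [map_prod]
    exact Finset.prod_congr rfl fun p _ => by rw [map_pow]
  rw [aux_abspow, aux_perm_pow, h2, Finset.sum_mul_sum]
  refine Finset.sum_congr rfl fun σ _ => Finset.sum_congr rfl fun τ _ => ?_
  rw [Finset.prod_mul_distrib]

/-- For a random `k × k` matrix with i.i.d. standard complex Gaussian entries,
`E |det M|^(2t) ≤ E |Perm M|^(2t)` for every positive integer `t`. -/
theorem gaussian_det_moment_le_perm_moment {Ω : Type*} [MeasurableSpace Ω]
    (P : Measure Ω) [IsProbabilityMeasure P] (k t : ℕ) (ht : 0 < t)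
    (M : Ω → Matrix (Fin k) (Fin k) ℂ)
    (hM : IsIIDStdComplexGaussianMatrix P M) :
    ∫ ω, ‖(M ω).det‖ ^ (2*t) ∂P
      ≤ ∫ ω, ‖(M ω).permanent‖ ^ (2*t) ∂P := by
  classical
  obtain ⟨hmeas, hind, hint, hmom⟩ := hM
  set Pm := Equiv.Perm (Fin k)
  -- the basic monomial families
  set G : (Fin t → Pm) → (Fin t → Pm) → Ω → ℂ := fun σ τ ω =>
    ∏ p : Fin k × Fin k,
      (M ω p.1 p.2 ^ expcnt σ p * (starRingEnd ℂ) (M ω p.1 p.2) ^ expcnt τ p) with hG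
  set c : (Fin t → Pm) → (Fin t → Pm) → ℝ := fun σ τ =>
    ∏ p : Fin k × Fin k,
      (if expcnt σ p = expcnt τ p then ((expcnt σ p).factorial : ℝ) else 0) with hc
  set rs : (Fin t → Pm) → ℝ := fun σ => ∏ j, ((Equiv.Perm.sign (σ j) : ℤ) : ℝ) with hrs
  have hconj : Measurable (starRingEnd ℂ) := Complex.continuous_conj.measurable
  have hYmeas : ∀ (σ τ : Fin t → Pm) (p : Fin k × Fin k),
      Measurable (fun ω => M ω p.1 p.2 ^ expcnt σ p *
        (starRingEnd ℂ) (M ω p.1 p.2) ^ expcnt τ p) := fun σ τ p =>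
    ((hmeas p.1 p.2).pow_const _).mul ((hconj.comp (hmeas p.1 p.2)).pow_const _)
  have hYind : ∀ (σ τ : Fin t → Pm),
      iIndepFun (fun p : Fin k × Fin k => fun ω =>
        M ω p.1 p.2 ^ expcnt σ p * (starRingEnd ℂ) (M ω p.1 p.2) ^ expcnt τ p) P := by
    intro σ τ
    exact hind.comp
      (fun p z => z ^ expcnt σ p * (starRingEnd ℂ) z ^ expcnt τ p)
      (fun p => (measurable_id.pow_const _).mul (hconj.pow_const _))
  have hGint : ∀ σ τ, Integrable (G σ τ) P := fun σ τ =>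
    aux_integrable_prod (hYind σ τ) (hYmeas σ τ) (fun p => hint p.1 p.2 _ _) Finset.univ
  have hGval : ∀ σ τ, ∫ ω, G σ τ ω ∂P = ((c σ τ : ℝ) : ℂ) := by
    intro σ τ
    rw [hG]
    rw [aux_integral_prod (hYind σ τ) (hYmeas σ τ) Finset.univ]
    rw [hc, Complex.ofReal_prod]
    refine Finset.prod_congr rfl fun p _ => ?_
    rw [hmom p.1 p.2]
    split_ifs <;> simp
  have hc_nonneg : ∀ σ τ, 0 ≤ c σ τ := fun σ τ =>
    Finset.prod_nonneg fun p _ => by positivity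
  have hterm : ∀ (σ τ : Fin t → Pm),
      Integrable (fun ω => (((∏ j, ((Equiv.Perm.sign (σ j) : ℤ) : ℂ)) *
        (∏ j, ((Equiv.Perm.sign (τ j) : ℤ) : ℂ))) * G σ τ ω)) P := fun σ τ =>
    (hGint σ τ).const_mul _
  -- the determinant moment
  have Hdet : ∫ ω, ‖(M ω).det‖ ^ (2*t) ∂P
      = ∑ σ : Fin t → Pm, ∑ τ : Fin t → Pm, (rs σ * rs τ) * c σ τ := by
    refine Complex.ofReal_injective ?_
    calc ((∫ ω, ‖(M ω).det‖ ^ (2*t) ∂P : ℝ) : ℂ)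
        = ∫ ω, ((‖(M ω).det‖ ^ (2*t) : ℝ) : ℂ) ∂P := integral_ofReal.symm
      _ = ∫ ω, ∑ σ : Fin t → Pm, ∑ τ : Fin t → Pm,
            (((∏ j, ((Equiv.Perm.sign (σ j) : ℤ) : ℂ)) *
              (∏ j, ((Equiv.Perm.sign (τ j) : ℤ) : ℂ))) * G σ τ ω) ∂P := by
          refine integral_congr_ae (Filter.Eventually.of_forall fun ω => ?_)
          beta_reduce
          rw [aux_det_key (M ω)]
      _ = ∑ σ : Fin t → Pm, ∑ τ : Fin t → Pm,
            ∫ ω, (((∏ j, ((Equiv.Perm.sign (σ j) : ℤ) : ℂ)) *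
              (∏ j, ((Equiv.Perm.sign (τ j) : ℤ) : ℂ))) * G σ τ ω) ∂P := by
          rw [integral_finset_sum _ (fun σ _ =>
            integrable_finset_sum _ (fun τ _ => hterm σ τ))]
          exact Finset.sum_congr rfl fun σ _ =>
            integral_finset_sum _ (fun τ _ => hterm σ τ)
      _ = ∑ σ : Fin t → Pm, ∑ τ : Fin t → Pm,
            (((∏ j, ((Equiv.Perm.sign (σ j) : ℤ) : ℂ)) *
              (∏ j, ((Equiv.Perm.sign (τ j) : ℤ) : ℂ))) * ((c σ τ : ℝ) : ℂ)) := by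
          refine Finset.sum_congr rfl fun σ _ => Finset.sum_congr rfl fun τ _ => ?_
          rw [integral_const_mul, hGval]
      _ = ((∑ σ : Fin t → Pm, ∑ τ : Fin t → Pm, (rs σ * rs τ) * c σ τ : ℝ) : ℂ) := by
          rw [Complex.ofReal_sum]
          refine Finset.sum_congr rfl fun σ _ => ?_
          rw [Complex.ofReal_sum]
          refine Finset.sum_congr rfl fun τ _ => ?_
          rw [hrs]
          push_cast
          ring
  -- the permanent moment
  have Hperm : ∫ ω, ‖(M ω).permanent‖ ^ (2*t) ∂P
      = ∑ σ : Fin t → Pm, ∑ τ : Fin t → Pm, c σ τ := by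
    refine Complex.ofReal_injective ?_
    calc ((∫ ω, ‖(M ω).permanent‖ ^ (2*t) ∂P : ℝ) : ℂ)
        = ∫ ω, ((‖(M ω).permanent‖ ^ (2*t) : ℝ) : ℂ) ∂P := integral_ofReal.symm
      _ = ∫ ω, ∑ σ : Fin t → Pm, ∑ τ : Fin t → Pm, G σ τ ω ∂P := by
          refine integral_congr_ae (Filter.Eventually.of_forall fun ω => ?_)
          beta_reduce
          rw [aux_perm_key (M ω)]
      _ = ∑ σ : Fin t → Pm, ∑ τ : Fin t → Pm, ∫ ω, G σ τ ω ∂P := by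
          rw [integral_finset_sum _ (fun σ _ =>
            integrable_finset_sum _ (fun τ _ => hGint σ τ))]
          exact Finset.sum_congr rfl fun σ _ =>
            integral_finset_sum _ (fun τ _ => hGint σ τ)
      _ = ((∑ σ : Fin t → Pm, ∑ τ : Fin t → Pm, c σ τ : ℝ) : ℂ) := by
          rw [Complex.ofReal_sum]
          refine Finset.sum_congr rfl fun σ _ => ?_
          rw [Complex.ofReal_sum]
          exact Finset.sum_congr rfl fun τ _ => hGval σ τ
  rw [Hdet, Hperm]
  have hsq : ∀ σ : Fin t → Pm, rs σ ^ 2 = 1 := by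
    intro σ
    rw [hrs, ← Finset.prod_pow]
    refine Finset.prod_eq_one fun j _ => ?_
    rcases Int.units_eq_one_or (Equiv.Perm.sign (σ j)) with h | h <;> simp [h]
  refine Finset.sum_le_sum fun σ _ => Finset.sum_le_sum fun τ _ => ?_
  refine mul_le_of_le_one_left (hc_nonneg σ τ) ?_
  nlinarith [hsq σ, hsq τ, sq_nonneg (rs σ - rs τ)]
end

section
/- The number of nonnegative-integer matrices with row sums μ and column sums ν equals Σ_λ K_{λμ}·K_{λν}, where K denotes Kostka numbers. -/
/-- The sorted (weakly decreasing) list of parts of a partition of `n`. -/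
def partsList {n : ℕ} (p : n.Partition) : List ℕ := p.parts.sort (· ≥ ·)

/-- The Kostka number `K_{s,c}`: the number of semistandard Young tableaux whose shape is
given by the list `s` of row lengths (rows weakly increasing, columns strictly increasing,
entries positive integers), and whose content is `c`, i.e. the entry `m+1` occurs exactly
`c.getD m 0` times. -/
noncomputable def kostka (s c : List ℕ) : ℕ :=
  Nat.card {T : ℕ → ℕ → ℕ //
    (∀ i j, ¬ j < s.getD i 0 → T i j = 0) ∧
    (∀ i j, j < s.getD i 0 → 1 ≤ T i j) ∧
    (∀ i j, j + 1 < s.getD i 0 → T i j ≤ T i (j + 1)) ∧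
    (∀ i j, j < s.getD (i + 1) 0 → T i j < T (i + 1) j) ∧
    (∀ m : ℕ, (∑ i ∈ Finset.range s.length,
        ((Finset.range (s.getD i 0)).filter (fun j => T i j = m + 1)).card)
      = c.getD m 0)}

/-- The number of nonnegative-integer matrices whose vector of row sums is `μ` and whose
vector of column sums is `ν`. -/
noncomputable def countNatMatrices (μ ν : List ℕ) : ℕ :=
  Nat.card {A : Matrix (Fin μ.length) (Fin ν.length) ℕ //
    (∀ i, ∑ j, A i j = μ.get i) ∧ (∀ j, ∑ i, A i j = ν.get j)}


set_option linter.unusedSectionVars false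

namespace RSKG

/-- weakly decreasing function -/
def Dec (f : ℕ → ℕ) : Prop := ∀ i, f (i+1) ≤ f i

/-- `HS a b` : `a ⊆ b` and `b / a` is a horizontal strip. -/
def HS (a b : ℕ → ℕ) : Prop := (∀ i, a i ≤ b i) ∧ (∀ i, b (i+1) ≤ a i)

lemma dec_of_hs_self {a : ℕ → ℕ} (h : HS a a) : Dec a := fun i => h.2 i

lemma hs_self {a : ℕ → ℕ} (h : Dec a) : HS a a := ⟨fun _ => le_rfl, fun i => h i⟩

lemma dec_zero : Dec (fun _ => 0) := fun _ => le_rfl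

/-- forward local growth rule -/
def F (ρ σ τ : ℕ → ℕ) (k : ℕ) : ℕ → ℕ
  | 0 => max (σ 0) (τ 0) + k
  | (i+1) => max (σ (i+1)) (τ (i+1)) + (min (σ i) (τ i) - ρ i)

/-- inverse local rule: partition part -/
def Finvp (σ τ lam : ℕ → ℕ) : ℕ → ℕ :=
  fun i => max (σ (i+1)) (τ (i+1)) + (min (σ i) (τ i) - lam (i+1))

/-- inverse local rule: matrix entry part -/
def Finvk (σ τ lam : ℕ → ℕ) : ℕ := lam 0 - max (σ 0) (τ 0)

section Forward

variable {ρ σ τ : ℕ → ℕ} {k : ℕ}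
variable (hρ : Dec ρ) (hσ : Dec σ) (hτ : Dec τ) (h1 : HS ρ σ) (h2 : HS ρ τ)

include hρ hσ hτ h1 h2

lemma F_dec : Dec (F ρ σ τ k) := by
  intro i
  cases i with
  | zero =>
      show max (σ 1) (τ 1) + (min (σ 0) (τ 0) - ρ 0) ≤ max (σ 0) (τ 0) + k
      have h1' : σ 1 ≤ ρ 0 := h1.2 0
      have h2' : τ 1 ≤ ρ 0 := h2.2 0
      have : max (σ 1) (τ 1) ≤ ρ 0 := max_le h1' h2'
      have hsub : min (σ 0) (τ 0) - ρ 0 ≤ max (σ 0) (τ 0) - ρ 0 := by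
        exact Nat.sub_le_sub_right (min_le_max) _
      calc max (σ 1) (τ 1) + (min (σ 0) (τ 0) - ρ 0)
          ≤ ρ 0 + (max (σ 0) (τ 0) - ρ 0) := Nat.add_le_add this hsub
        _ ≤ max (σ 0) (τ 0) + k := by
            have : ρ 0 ≤ max (σ 0) (τ 0) := le_trans (h1.1 0) (le_max_left _ _)
            omega
  | succ i =>
      show max (σ (i+2)) (τ (i+2)) + (min (σ (i+1)) (τ (i+1)) - ρ (i+1))
          ≤ max (σ (i+1)) (τ (i+1)) + (min (σ i) (τ i) - ρ i)
      have ha : max (σ (i+2)) (τ (i+2)) ≤ ρ (i+1) := max_le (h1.2 (i+1)) (h2.2 (i+1))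
      have hb : ρ (i+1) ≤ min (σ (i+1)) (τ (i+1)) := le_min (h1.1 (i+1)) (h2.1 (i+1))
      have hc : ρ i ≤ min (σ i) (τ i) := le_min (h1.1 i) (h2.1 i)
      have hd : min (σ (i+1)) (τ (i+1)) ≤ max (σ (i+1)) (τ (i+1)) := min_le_max
      omega

lemma HS_F_left : HS σ (F ρ σ τ k) := by
  constructor
  · intro i
    cases i with
    | zero => exact le_trans (le_max_left _ _) (Nat.le_add_right _ _)
    | succ i => exact le_trans (le_max_left _ _) (Nat.le_add_right _ _)
  · intro i
    show max (σ (i+1)) (τ (i+1)) + (min (σ i) (τ i) - ρ i) ≤ σ i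
    have ha : max (σ (i+1)) (τ (i+1)) ≤ ρ i := max_le (h1.2 i) (h2.2 i)
    have hb : ρ i ≤ min (σ i) (τ i) := le_min (h1.1 i) (h2.1 i)
    have hc : min (σ i) (τ i) ≤ σ i := min_le_left _ _
    omega

lemma HS_F_right : HS τ (F ρ σ τ k) := by
  constructor
  · intro i
    cases i with
    | zero => exact le_trans (le_max_right _ _) (Nat.le_add_right _ _)
    | succ i => exact le_trans (le_max_right _ _) (Nat.le_add_right _ _)
  · intro i
    show max (σ (i+1)) (τ (i+1)) + (min (σ i) (τ i) - ρ i) ≤ τ i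
    have ha : max (σ (i+1)) (τ (i+1)) ≤ ρ i := max_le (h1.2 i) (h2.2 i)
    have hb : ρ i ≤ min (σ i) (τ i) := le_min (h1.1 i) (h2.1 i)
    have hc : min (σ i) (τ i) ≤ τ i := min_le_right _ _
    omega

/-- exact pointwise identity for sizes -/
lemma F_succ_add (i : ℕ) :
    F ρ σ τ k (i+1) + ρ i = max (σ (i+1)) (τ (i+1)) + min (σ i) (τ i) := by
  have hb : ρ i ≤ min (σ i) (τ i) := le_min (h1.1 i) (h2.1 i)
  show max (σ (i+1)) (τ (i+1)) + (min (σ i) (τ i) - ρ i) + ρ i = _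
  omega

lemma Finvp_F : Finvp σ τ (F ρ σ τ k) = ρ := by
  funext i
  have h := F_succ_add hρ hσ hτ h1 h2 (k := k) i
  show max (σ (i+1)) (τ (i+1)) + (min (σ i) (τ i) - F ρ σ τ k (i+1)) = ρ i
  have ha : max (σ (i+1)) (τ (i+1)) ≤ ρ i := max_le (h1.2 i) (h2.2 i)
  have hb : ρ i ≤ min (σ i) (τ i) := le_min (h1.1 i) (h2.1 i)
  omega

lemma Finvk_F : Finvk σ τ (F ρ σ τ k) = k := by
  show F ρ σ τ k 0 - max (σ 0) (τ 0) = k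
  show max (σ 0) (τ 0) + k - max (σ 0) (τ 0) = k
  omega

end Forward

section Backward

variable {σ τ lam : ℕ → ℕ}
variable (hσ : Dec σ) (hτ : Dec τ) (hl : Dec lam) (h1 : HS σ lam) (h2 : HS τ lam)

include hσ hτ hl h1 h2

lemma lam_le_min (i : ℕ) : lam (i+1) ≤ min (σ i) (τ i) := le_min (h1.2 i) (h2.2 i)

lemma max_le_lam (i : ℕ) : max (σ i) (τ i) ≤ lam i := max_le (h1.1 i) (h2.1 i)

lemma Finvp_succ_add (i : ℕ) :
    Finvp σ τ lam i + lam (i+1) = max (σ (i+1)) (τ (i+1)) + min (σ i) (τ i) := by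
  have := lam_le_min hσ hτ hl h1 h2 i
  show max (σ (i+1)) (τ (i+1)) + (min (σ i) (τ i) - lam (i+1)) + lam (i+1) = _
  omega

lemma Finvk_add : Finvk σ τ lam + max (σ 0) (τ 0) = lam 0 := by
  have := max_le_lam hσ hτ hl h1 h2 0
  show lam 0 - max (σ 0) (τ 0) + max (σ 0) (τ 0) = lam 0
  omega

lemma Finvp_dec : Dec (Finvp σ τ lam) := by
  intro i
  have e1 := Finvp_succ_add hσ hτ hl h1 h2 i
  have e2 : Finvp σ τ lam (i+1) + lam (i+2)
      = max (σ (i+2)) (τ (i+2)) + min (σ (i+1)) (τ (i+1)) :=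
    Finvp_succ_add hσ hτ hl h1 h2 (i+1)
  have ha : max (σ (i+2)) (τ (i+2)) ≤ lam (i+2) := max_le_lam hσ hτ hl h1 h2 (i+2)
  have hb : lam (i+2) ≤ min (σ (i+1)) (τ (i+1)) := lam_le_min hσ hτ hl h1 h2 (i+1)
  have hc : min (σ (i+1)) (τ (i+1)) ≤ max (σ (i+1)) (τ (i+1)) := min_le_max
  have hd : lam (i+1) ≤ min (σ i) (τ i) := lam_le_min hσ hτ hl h1 h2 i
  omega

lemma HS_Finvp_left : HS (Finvp σ τ lam) σ := by
  constructor
  · intro i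
    have e1 := Finvp_succ_add hσ hτ hl h1 h2 i
    have ha : max (σ (i+1)) (τ (i+1)) ≤ lam (i+1) := max_le_lam hσ hτ hl h1 h2 (i+1)
    have hb : min (σ i) (τ i) ≤ σ i := min_le_left _ _
    omega
  · intro i
    have e1 := Finvp_succ_add hσ hτ hl h1 h2 i
    have hb : lam (i+1) ≤ min (σ i) (τ i) := lam_le_min hσ hτ hl h1 h2 i
    have hc : σ (i+1) ≤ max (σ (i+1)) (τ (i+1)) := le_max_left _ _
    omega

lemma HS_Finvp_right : HS (Finvp σ τ lam) τ := by
  constructor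
  · intro i
    have e1 := Finvp_succ_add hσ hτ hl h1 h2 i
    have ha : max (σ (i+1)) (τ (i+1)) ≤ lam (i+1) := max_le_lam hσ hτ hl h1 h2 (i+1)
    have hb : min (σ i) (τ i) ≤ τ i := min_le_right _ _
    omega
  · intro i
    have e1 := Finvp_succ_add hσ hτ hl h1 h2 i
    have hb : lam (i+1) ≤ min (σ i) (τ i) := lam_le_min hσ hτ hl h1 h2 i
    have hc : τ (i+1) ≤ max (σ (i+1)) (τ (i+1)) := le_max_right _ _
    omega

lemma F_Finvp : F (Finvp σ τ lam) σ τ (Finvk σ τ lam) = lam := by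
  funext i
  cases i with
  | zero =>
      show max (σ 0) (τ 0) + Finvk σ τ lam = lam 0
      have := Finvk_add hσ hτ hl h1 h2
      omega
  | succ i =>
      show max (σ (i+1)) (τ (i+1)) + (min (σ i) (τ i) - Finvp σ τ lam i) = lam (i+1)
      have e1 := Finvp_succ_add hσ hτ hl h1 h2 i
      have ha : max (σ (i+1)) (τ (i+1)) ≤ lam (i+1) := max_le_lam hσ hτ hl h1 h2 (i+1)
      have hb : lam (i+1) ≤ min (σ i) (τ i) := lam_le_min hσ hτ hl h1 h2 i
      omega

end Backward

/-- size with cutoff -/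
def sz (f : ℕ → ℕ) (N : ℕ) : ℕ := ∑ i ∈ Finset.range N, f i

lemma sz_succ (f : ℕ → ℕ) (N : ℕ) : sz f (N+1) = sz f N + f N := Finset.sum_range_succ f N

lemma sz_zero_fn (N : ℕ) : sz (fun _ => 0) N = 0 := Finset.sum_const_zero

/-- size identity for the forward rule -/
lemma sz_F {ρ σ τ : ℕ → ℕ} {k : ℕ}
    (hρ : Dec ρ) (hσ : Dec σ) (hτ : Dec τ) (h1 : HS ρ σ) (h2 : HS ρ τ)
    {N : ℕ} (hσN : σ N = 0) (hτN : τ N = 0) :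
    sz (F ρ σ τ k) (N+1) + sz ρ (N+1) = sz σ (N+1) + sz τ (N+1) + k := by
  have hρN : ρ N = 0 := Nat.le_zero.mp (hσN ▸ h1.1 N)
  have key : ∀ i, F ρ σ τ k (i+1) + ρ i = max (σ (i+1)) (τ (i+1)) + min (σ i) (τ i) :=
    F_succ_add hρ hσ hτ h1 h2
  -- sum over range
  have main : ∀ M, sz (F ρ σ τ k) (M+1) + sz ρ M
      = max (σ 0) (τ 0) + k + ∑ i ∈ Finset.range M, (max (σ (i+1)) (τ (i+1)) + min (σ i) (τ i)) := by
    intro M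
    induction M with
    | zero => simp [sz, F]
    | succ M ih =>
        rw [sz_succ (F ρ σ τ k) (M+1), sz_succ ρ M, Finset.sum_range_succ]
        have := key M
        omega
  have h3 := main N
  have hmm : ∀ M, sz σ (M+1) + sz τ (M+1)
      = (∑ i ∈ Finset.range M, (max (σ (i+1)) (τ (i+1)) + min (σ i) (τ i)))
        + max (σ 0) (τ 0) + min (σ M) (τ M) := by
    intro M
    induction M with
    | zero => simp only [sz, Finset.sum_range_succ, Finset.sum_range_zero]; omega
    | succ M ih =>
        rw [sz_succ σ (M+1), sz_succ τ (M+1), Finset.sum_range_succ]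
        omega
  have h4 := hmm N
  have h5 : min (σ N) (τ N) = 0 := by omega
  have h6 : sz ρ (N+1) = sz ρ N + ρ N := sz_succ ρ N
  omega



lemma sz_Finv {σ τ lam : ℕ → ℕ}
    (hσ : Dec σ) (hτ : Dec τ) (hl : Dec lam) (h1 : HS σ lam) (h2 : HS τ lam)
    {N : ℕ} (hσN : σ N = 0) (hτN : τ N = 0) :
    sz (Finvp σ τ lam) (N+1) + sz lam (N+1)
      = sz σ (N+1) + sz τ (N+1) + Finvk σ τ lam := by
  have hρ := Finvp_dec hσ hτ hl h1 h2
  have h1' := HS_Finvp_left hσ hτ hl h1 h2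
  have h2' := HS_Finvp_right hσ hτ hl h1 h2
  have h := sz_F hρ hσ hτ h1' h2' (k := Finvk σ τ lam) hσN hτN
  rw [F_Finvp hσ hτ hl h1 h2] at h
  omega

/-! ### The growth grid -/

/-- one new row of the growth grid -/
def grow (prev : ℕ → ℕ → ℕ) (row : ℕ → ℕ) : ℕ → ℕ → ℕ
  | 0 => fun _ => 0
  | (j+1) => F (prev j) (grow prev row j) (prev (j+1)) (row j)

/-- the growth grid of a matrix -/
def grid (A : ℕ → ℕ → ℕ) : ℕ → ℕ → ℕ → ℕ
  | 0 => fun _ _ => 0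
  | (i+1) => grow (grid A i) (A i)

lemma grid_zero_row (A : ℕ → ℕ → ℕ) (j : ℕ) : grid A 0 j = fun _ => 0 := rfl

lemma grid_zero_col (A : ℕ → ℕ → ℕ) (i : ℕ) : grid A i 0 = fun _ => 0 := by
  cases i <;> rfl

lemma grid_succ_succ (A : ℕ → ℕ → ℕ) (i j : ℕ) :
    grid A (i+1) (j+1) = F (grid A i j) (grid A (i+1) j) (grid A i (j+1)) (A i j) := rfl


lemma grow_inv {prev : ℕ → ℕ → ℕ} {row : ℕ → ℕ}
    (h0 : prev 0 = fun _ => 0)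
    (hdec : ∀ j, Dec (prev j)) (hhs : ∀ j, HS (prev j) (prev (j+1))) :
    ∀ j, Dec (grow prev row j) ∧ HS (prev j) (grow prev row j)
      ∧ HS (grow prev row j) (grow prev row (j+1)) := by
  intro j
  induction j with
  | zero =>
      refine ⟨dec_zero, by rw [h0]; exact hs_self dec_zero, ?_⟩
      show HS (grow prev row 0) (F (prev 0) (grow prev row 0) (prev 1) (row 0))
      exact HS_F_left (h0 ▸ dec_zero) dec_zero (hdec 1)
        (by show HS (prev 0) (grow prev row 0); rw [h0]; exact hs_self dec_zero) (hhs 0)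
  | succ j ih =>
      obtain ⟨hd, hv, hh⟩ := ih
      have hd1 : Dec (grow prev row (j+1)) :=
        F_dec (hdec j) hd (hdec (j+1)) hv (hhs j)
      have hv1 : HS (prev (j+1)) (grow prev row (j+1)) :=
        HS_F_right (hdec j) hd (hdec (j+1)) hv (hhs j)
      refine ⟨hd1, hv1, ?_⟩
      show HS (grow prev row (j+1))
        (F (prev (j+1)) (grow prev row (j+1)) (prev (j+2)) (row (j+1)))
      exact HS_F_left (hdec (j+1)) hd1 (hdec (j+2)) hv1 (hhs (j+1))

lemma grid_row_inv (A : ℕ → ℕ → ℕ) :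
    ∀ i, (∀ j, Dec (grid A i j)) ∧ (∀ j, HS (grid A i j) (grid A i (j+1))) := by
  intro i
  induction i with
  | zero => exact ⟨fun _ => dec_zero, fun _ => hs_self dec_zero⟩
  | succ i ih =>
      have h0 : grid A i 0 = fun _ => 0 := grid_zero_col A i
      have h := grow_inv (row := A i) h0 ih.1 ih.2
      exact ⟨fun j => (h j).1, fun j => (h j).2.2⟩

lemma grid_dec (A : ℕ → ℕ → ℕ) (i j : ℕ) : Dec (grid A i j) := (grid_row_inv A i).1 j

lemma grid_hs_row (A : ℕ → ℕ → ℕ) (i j : ℕ) : HS (grid A i j) (grid A i (j+1)) :=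
  (grid_row_inv A i).2 j

lemma grid_hs_col (A : ℕ → ℕ → ℕ) (i j : ℕ) : HS (grid A i j) (grid A (i+1) j) := by
  have h0 : grid A i 0 = fun _ => 0 := grid_zero_col A i
  exact (grow_inv (row := A i) h0 (grid_row_inv A i).1 (grid_row_inv A i).2 j).2.1

/-- support bound for the grid -/
lemma grid_supp (A : ℕ → ℕ → ℕ) : ∀ i j t, i ≤ t → grid A i j t = 0 := by
  intro i
  induction i with
  | zero => intro j t _; rfl
  | succ i ih =>
      intro j
      induction j with
      | zero => intro t _; rw [grid_zero_col]
      | succ j ihj =>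
          intro t ht
          obtain ⟨t, rfl⟩ : ∃ t', t = t' + 1 := ⟨t - 1, by omega⟩
          rw [grid_succ_succ]
          show max (grid A (i+1) j (t+1)) (grid A i (j+1) (t+1))
            + (min (grid A (i+1) j t) (grid A i (j+1) t) - grid A i j t) = 0
          rw [ihj (t+1) ht, ih (j+1) (t+1) (by omega), ih (j+1) t (by omega)]
          simp

/-! ### chains -/

lemma chain_dec {g : ℕ → ℕ → ℕ} (h0 : ∀ t, g 0 t = 0)
    (hc : ∀ i, HS (g i) (g (i+1))) : ∀ i, Dec (g i) := by
  intro i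
  induction i with
  | zero => intro t; rw [h0, h0]
  | succ i ih => intro t; exact le_trans ((hc i).2 t) ((hc i).1 t)

lemma chain_supp {g : ℕ → ℕ → ℕ} (h0 : ∀ t, g 0 t = 0)
    (hc : ∀ i, HS (g i) (g (i+1))) : ∀ i t, i ≤ t → g i t = 0 := by
  intro i
  induction i with
  | zero => intro t _; exact h0 t
  | succ i ih =>
      intro t ht
      obtain ⟨t, rfl⟩ : ∃ t', t = t' + 1 := ⟨t - 1, by omega⟩
      exact Nat.le_zero.mp (ih t (by omega) ▸ (hc i).2 t)

/-! ### backward grid -/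

/-- reconstruct one row from the row below it; argument is distance from column `L` -/
def brow (next : ℕ → ℕ → ℕ) (anchor : ℕ → ℕ) (L : ℕ) : ℕ → ℕ → ℕ
  | 0 => anchor
  | (t+1) => Finvp (next (L - (t+1))) (brow next anchor L t) (next (L - t))

/-- rows of the backward grid, from the top: `hrowAux … t` is row `K - t` -/
def hrowAux (gP gQ : ℕ → ℕ → ℕ) (K L : ℕ) : ℕ → ℕ → ℕ → ℕ
  | 0 => fun j => gP (min j L)
  | (t+1) => fun j => brow (hrowAux gP gQ K L t) (gQ (K - (t+1))) L (L - j)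

/-- the backward grid -/
def bgrid (gP gQ : ℕ → ℕ → ℕ) (K L : ℕ) (i j : ℕ) : ℕ → ℕ :=
  hrowAux gP gQ K L (K - i) j

/-- the matrix recovered from the backward grid -/
def bmat (gP gQ : ℕ → ℕ → ℕ) (K L : ℕ) (i j : ℕ) : ℕ :=
  Finvk (bgrid gP gQ K L (i+1) j) (bgrid gP gQ K L i (j+1)) (bgrid gP gQ K L (i+1) (j+1))

section BackGrid

variable {gP gQ f : ℕ → ℕ → ℕ} {K L : ℕ}

lemma bgrid_top {i : ℕ} (hi : K ≤ i) (j : ℕ) :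
    bgrid gP gQ K L i j = gP (min j L) := by
  unfold bgrid
  rw [Nat.sub_eq_zero_of_le hi]
  rfl

lemma bgrid_row {i : ℕ} (hi : i < K) (j : ℕ) :
    bgrid gP gQ K L i j
      = brow (hrowAux gP gQ K L (K - (i+1))) (gQ i) L (L - j) := by
  unfold bgrid
  have h1 : K - i = (K - (i+1)) + 1 := by omega
  rw [h1]
  show brow (hrowAux gP gQ K L (K - (i+1))) (gQ (K - (K - (i+1) + 1))) L (L - j) = _
  have h2 : K - (K - (i+1) + 1) = i := by omega
  rw [h2]

lemma bgrid_right {i : ℕ} (hi : i < K) {j : ℕ} (hj : L ≤ j) :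
    bgrid gP gQ K L i j = gQ i := by
  rw [bgrid_row hi j, Nat.sub_eq_zero_of_le hj]
  rfl

lemma bgrid_step {i j : ℕ} (hi : i < K) (hj : j < L) :
    bgrid gP gQ K L i j
      = Finvp (bgrid gP gQ K L (i+1) j) (bgrid gP gQ K L i (j+1))
          (bgrid gP gQ K L (i+1) (j+1)) := by
  rw [bgrid_row hi j, bgrid_row hi (j+1)]
  have h3 : L - j = (L - (j+1)) + 1 := by omega
  rw [h3]
  show Finvp (hrowAux gP gQ K L (K - (i+1)) (L - (L - (j+1) + 1)))
      (brow (hrowAux gP gQ K L (K - (i+1))) (gQ i) L (L - (j+1)))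
      (hrowAux gP gQ K L (K - (i+1)) (L - (L - (j+1)))) = _
  have e1 : L - (L - (j+1) + 1) = j := by omega
  have e2 : L - (L - (j+1)) = j + 1 := by omega
  rw [e1, e2]
  rfl

end BackGrid

section BackInv

variable {gP gQ : ℕ → ℕ → ℕ} {f : ℕ → ℕ} {K L : ℕ}
variable (hQ0 : ∀ t, gQ 0 t = 0) (hQc : ∀ i, HS (gQ i) (gQ (i+1)))
variable (hQe : ∀ i, K ≤ i → gQ i = f)
variable (hP0 : ∀ t, gP 0 t = 0) (hPc : ∀ j, HS (gP j) (gP (j+1)))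
variable (hPe : ∀ j, L ≤ j → gP j = f)

include hQ0 hQc hQe hP0 hPc hPe

lemma bgrid_right' (i : ℕ) {j : ℕ} (hj : L ≤ j) :
    bgrid gP gQ K L i j = gQ (min i K) := by
  rcases lt_or_ge i K with hi | hi
  · rw [bgrid_right hi hj, min_eq_left hi.le]
  · rw [bgrid_top hi, min_eq_right hj, min_eq_right hi, hPe L le_rfl, hQe K le_rfl]

lemma binv : ∀ i j, Dec (bgrid gP gQ K L i j)
    ∧ HS (bgrid gP gQ K L i j) (bgrid gP gQ K L i (j+1))
    ∧ HS (bgrid gP gQ K L i j) (bgrid gP gQ K L (i+1) j) := by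
  have hQd := chain_dec hQ0 hQc
  have hPd := chain_dec hP0 hPc
  have top : ∀ i j, K ≤ i → Dec (bgrid gP gQ K L i j)
      ∧ HS (bgrid gP gQ K L i j) (bgrid gP gQ K L i (j+1))
      ∧ HS (bgrid gP gQ K L i j) (bgrid gP gQ K L (i+1) j) := by
    intro i j hi
    rw [bgrid_top hi, bgrid_top hi, bgrid_top (le_trans hi (Nat.le_succ i))]
    refine ⟨hPd _, ?_, hs_self (hPd _)⟩
    rcases le_or_gt (j+1) L with h | h
    · have e1 : min j L = j := min_eq_left (by omega)
      have e2 : min (j+1) L = j+1 := min_eq_left h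
      rw [e1, e2]; exact hPc j
    · have e1 : min j L = L := min_eq_right (by omega)
      have e2 : min (j+1) L = L := min_eq_right (by omega)
      rw [e1, e2]; exact hs_self (hPd L)
  have main : ∀ t i, K - t ≤ i → ∀ j, Dec (bgrid gP gQ K L i j)
      ∧ HS (bgrid gP gQ K L i j) (bgrid gP gQ K L i (j+1))
      ∧ HS (bgrid gP gQ K L i j) (bgrid gP gQ K L (i+1) j) := by
    intro t
    induction t with
    | zero => intro i hi j; exact top i j (by omega)
    | succ t ih =>
        intro i hi j
        by_cases hiK : K - t ≤ i
        · exact ih i hiK j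
        · have hi1 : i + 1 = K - t := by omega
          have hiK' : i < K := by omega
          have ihrow : ∀ j', Dec (bgrid gP gQ K L (i+1) j')
              ∧ HS (bgrid gP gQ K L (i+1) j') (bgrid gP gQ K L (i+1) (j'+1))
              ∧ HS (bgrid gP gQ K L (i+1) j') (bgrid gP gQ K L (i+2) j') :=
            fun j' => ih (i+1) (by omega) j'
          -- downward induction within the row
          have inner : ∀ u j', L - u ≤ j' → Dec (bgrid gP gQ K L i j')
              ∧ HS (bgrid gP gQ K L i j') (bgrid gP gQ K L i (j'+1))
              ∧ HS (bgrid gP gQ K L i j') (bgrid gP gQ K L (i+1) j') := by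
            intro u
            induction u with
            | zero =>
                intro j' hj'
                have hj'' : L ≤ j' := by omega
                rw [bgrid_right hiK' hj'', bgrid_right hiK' (by omega),
                  bgrid_right' hQ0 hQc hQe hP0 hPc hPe (i+1) hj'']
                have : min (i+1) K = i + 1 := min_eq_left (by omega)
                rw [this]
                exact ⟨hQd i, hs_self (hQd i), hQc i⟩
            | succ u ihu =>
                intro j' hj'
                by_cases hju : L - u ≤ j'
                · exact ihu j' hju
                · have hjL : j' < L := by omega
                  have hσ := ihrow j'
                  have hτ := ihu (j'+1) (by omega)
                  have hld := (ihrow (j'+1)).1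
                  have hσd := hσ.1
                  have hσl := hσ.2.1
                  have hτd := hτ.1
                  have hτl := hτ.2.2
                  have hstep := bgrid_step (gP := gP) (gQ := gQ) hiK' hjL
                  refine ⟨?_, ?_, ?_⟩
                  · rw [hstep]; exact Finvp_dec hσd hτd hld hσl hτl
                  · rw [hstep]; exact HS_Finvp_right hσd hτd hld hσl hτl
                  · rw [hstep]; exact HS_Finvp_left hσd hτd hld hσl hτl
          exact inner (L - j + 1) j (by omega)
  intro i j
  exact main (K - i + 1) i (by omega) j

end BackInv

section BackInv2

variable {gP gQ : ℕ → ℕ → ℕ} {f : ℕ → ℕ} {K L : ℕ}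
variable (hQ0 : ∀ t, gQ 0 t = 0) (hQc : ∀ i, HS (gQ i) (gQ (i+1)))
variable (hQe : ∀ i, K ≤ i → gQ i = f)
variable (hP0 : ∀ t, gP 0 t = 0) (hPc : ∀ j, HS (gP j) (gP (j+1)))
variable (hPe : ∀ j, L ≤ j → gP j = f)

include hQ0 hQc hQe hP0 hPc hPe

lemma bgrid_F {i j : ℕ} (hi : i < K) (hj : j < L) :
    F (bgrid gP gQ K L i j) (bgrid gP gQ K L (i+1) j) (bgrid gP gQ K L i (j+1))
      (bmat gP gQ K L i j) = bgrid gP gQ K L (i+1) (j+1) := by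
  have binv' := binv hQ0 hQc hQe hP0 hPc hPe (gP := gP) (gQ := gQ) (K := K) (L := L)
  have hσd := (binv' (i+1) j).1
  have hσl := (binv' (i+1) j).2.1
  have hτd := (binv' i (j+1)).1
  have hτl := (binv' i (j+1)).2.2
  have hld := (binv' (i+1) (j+1)).1
  rw [bgrid_step hi hj]
  exact F_Finvp hσd hτd hld hσl hτl

lemma bgrid_le_topfn : ∀ i j t, bgrid gP gQ K L i j t ≤ gP (min j L) t := by
  have binv' := binv hQ0 hQc hQe hP0 hPc hPe (gP := gP) (gQ := gQ) (K := K) (L := L)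
  have main : ∀ d i, K - i ≤ d → ∀ j t, bgrid gP gQ K L i j t ≤ gP (min j L) t := by
    intro d
    induction d with
    | zero => intro i hi j t; rw [bgrid_top (by omega)]
    | succ d ih =>
        intro i hi j t
        by_cases hiK : K - i ≤ d
        · exact ih i hiK j t
        · exact le_trans ((binv' i j).2.2.1 t) (ih (i+1) (by omega) j t)
  exact fun i j t => main (K - i) i le_rfl j t

lemma bgrid_supp : ∀ i j t, j ≤ t → bgrid gP gQ K L i j t = 0 := by
  intro i j t ht
  have h1 := bgrid_le_topfn hQ0 hQc hQe hP0 hPc hPe i j t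
  have h2 : gP (min j L) t = 0 :=
    chain_supp hP0 hPc (min j L) t (le_trans (min_le_left _ _) ht)
  omega

lemma bgrid_row0 : ∀ j t, bgrid gP gQ K L 0 j t = 0 := by
  have binv' := binv hQ0 hQc hQe hP0 hPc hPe (gP := gP) (gQ := gQ) (K := K) (L := L)
  have mono : ∀ d j t, bgrid gP gQ K L 0 j t ≤ bgrid gP gQ K L 0 (j + d) t := by
    intro d
    induction d with
    | zero => intro j t; exact le_rfl
    | succ d ih =>
        intro j t
        have := (binv' 0 (j + d)).2.1.1 t
        have h2 := ih j t
        have e : j + (d+1) = (j + d) + 1 := by omega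
        rw [e]
        omega
  intro j t
  have hL : bgrid gP gQ K L 0 L t = 0 := by
    rw [bgrid_right' hQ0 hQc hQe hP0 hPc hPe 0 le_rfl]
    have : min 0 K = 0 := by omega
    rw [this, hQ0]
  rcases le_or_gt j L with h | h
  · have := mono (L - j) j t
    have e : j + (L - j) = L := by omega
    rw [e] at this
    omega
  · rw [bgrid_right' hQ0 hQc hQe hP0 hPc hPe 0 h.le]
    have : min 0 K = 0 := by omega
    rw [this, hQ0]

lemma bmat_sz {i j N : ℕ} (hi : i < K) (hj : j < L) (hN : j + 1 ≤ N) :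
    sz (bgrid gP gQ K L i j) (N+1) + sz (bgrid gP gQ K L (i+1) (j+1)) (N+1)
      = sz (bgrid gP gQ K L (i+1) j) (N+1) + sz (bgrid gP gQ K L i (j+1)) (N+1)
        + bmat gP gQ K L i j := by
  have binv' := binv hQ0 hQc hQe hP0 hPc hPe (gP := gP) (gQ := gQ) (K := K) (L := L)
  have hσd := (binv' (i+1) j).1
  have hσl := (binv' (i+1) j).2.1
  have hτd := (binv' i (j+1)).1
  have hτl := (binv' i (j+1)).2.2
  have hld := (binv' (i+1) (j+1)).1
  have hσN : bgrid gP gQ K L (i+1) j N = 0 :=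
    bgrid_supp hQ0 hQc hQe hP0 hPc hPe _ _ _ (by omega)
  have hτN : bgrid gP gQ K L i (j+1) N = 0 :=
    bgrid_supp hQ0 hQc hQe hP0 hPc hPe _ _ _ hN
  have h := sz_Finv hσd hτd hld hσl hτl hσN hτN
  rw [← bgrid_step hi hj] at h
  exact (by unfold bmat; omega)

lemma brow_sum {i N : ℕ} (hi : i < K) (hN : L ≤ N) :
    ∀ j, j ≤ L → sz (bgrid gP gQ K L (i+1) j) (N+1)
      = sz (bgrid gP gQ K L i j) (N+1) + ∑ j' ∈ Finset.range j, bmat gP gQ K L i j' := by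
  intro j
  induction j with
  | zero =>
      intro _
      have h1 : ∀ i', sz (bgrid gP gQ K L i' 0) (N+1) = 0 := by
        intro i'
        apply Finset.sum_eq_zero
        intro t _
        exact bgrid_supp hQ0 hQc hQe hP0 hPc hPe i' 0 t (by omega)
      rw [h1, h1]
      simp
  | succ j ih =>
      intro hj
      have hjL : j < L := by omega
      have h1 := bmat_sz hQ0 hQc hQe hP0 hPc hPe (N := N) hi hjL (by omega)
      have h2 := ih (by omega)
      rw [Finset.sum_range_succ]
      omega

lemma bcol_sum {j N : ℕ} (hj : j < L) (hN : L ≤ N) :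
    ∀ i, i ≤ K → sz (bgrid gP gQ K L i (j+1)) (N+1)
      = sz (bgrid gP gQ K L i j) (N+1) + ∑ i' ∈ Finset.range i, bmat gP gQ K L i' j := by
  intro i
  induction i with
  | zero =>
      intro _
      have h1 : ∀ j', sz (bgrid gP gQ K L 0 j') (N+1) = 0 := by
        intro j'
        apply Finset.sum_eq_zero
        intro t _
        exact bgrid_row0 hQ0 hQc hQe hP0 hPc hPe j' t
      rw [h1, h1]
      simp
  | succ i ih =>
      intro hi
      have hiK : i < K := by omega
      have h1 := bmat_sz hQ0 hQc hQe hP0 hPc hPe (N := N) hiK hj (by omega)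
      have h2 := ih (by omega)
      rw [Finset.sum_range_succ]
      omega

end BackInv2

/-! ### forward grid size telescopes -/

lemma grid_cell_sz (A : ℕ → ℕ → ℕ) {i j N : ℕ} (hN : i + 1 ≤ N) :
    sz (grid A (i+1) (j+1)) (N+1) + sz (grid A i j) (N+1)
      = sz (grid A (i+1) j) (N+1) + sz (grid A i (j+1)) (N+1) + A i j := by
  have hσN : grid A (i+1) j N = 0 := grid_supp A (i+1) j N hN
  have hτN : grid A i (j+1) N = 0 := grid_supp A i (j+1) N (by omega)
  have h := sz_F (grid_dec A i j) (grid_dec A (i+1) j) (grid_dec A i (j+1))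
    (grid_hs_col A i j) (grid_hs_row A i j) (k := A i j) hσN hτN
  rw [← grid_succ_succ] at h
  omega

lemma grid_row_sum (A : ℕ → ℕ → ℕ) {i N : ℕ} (hN : i + 1 ≤ N) :
    ∀ j, sz (grid A (i+1) j) (N+1)
      = sz (grid A i j) (N+1) + ∑ j' ∈ Finset.range j, A i j' := by
  intro j
  induction j with
  | zero =>
      have h1 : ∀ i', sz (grid A i' 0) (N+1) = 0 := by
        intro i'; rw [grid_zero_col]; exact sz_zero_fn _
      rw [h1, h1]; simp
  | succ j ih =>
      have h1 := grid_cell_sz A (i := i) (j := j) hN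
      rw [Finset.sum_range_succ]
      omega

lemma grid_col_sum (A : ℕ → ℕ → ℕ) {j N : ℕ} :
    ∀ i, i ≤ N → sz (grid A i (j+1)) (N+1)
      = sz (grid A i j) (N+1) + ∑ i' ∈ Finset.range i, A i' j := by
  intro i
  induction i with
  | zero =>
      intro _
      have h1 : ∀ j', sz (grid A 0 j') (N+1) = 0 := by
        intro j'; rw [grid_zero_row]; exact sz_zero_fn _
      rw [h1, h1]; simp
  | succ i ih =>
      intro hi
      have h1 := grid_cell_sz A (i := i) (j := j) hi
      have h2 := ih (by omega)
      rw [Finset.sum_range_succ]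
      omega

/-! ### round trips -/

lemma bgrid_of_grid (A : ℕ → ℕ → ℕ) (K L : ℕ) :
    ∀ i, i ≤ K → ∀ j, j ≤ L →
      bgrid (fun j' => grid A K (min j' L)) (fun i' => grid A (min i' K) L) K L i j
        = grid A i j := by
  set gP := fun j' => grid A K (min j' L) with hgP
  set gQ := fun i' => grid A (min i' K) L with hgQ
  have main : ∀ t i, K - t ≤ i → i ≤ K → ∀ j, j ≤ L →
      bgrid gP gQ K L i j = grid A i j := by
    intro t
    induction t with
    | zero =>
        intro i hi hi' j hj
        have hK : i = K := by omega
        rw [hK, bgrid_top le_rfl]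
        show grid A K (min (min j L) L) = grid A K j
        rw [min_assoc, min_self, min_eq_left hj]
    | succ t ih =>
        intro i hi hi' j hj
        by_cases hiK : K - t ≤ i
        · exact ih i hiK hi' j hj
        · have hiK' : i < K := by omega
          have inner : ∀ u j', L - u ≤ j' → j' ≤ L →
              bgrid gP gQ K L i j' = grid A i j' := by
            intro u
            induction u with
            | zero =>
                intro j' h1 h2
                have hjE : j' = L := by omega
                rw [hjE, bgrid_right hiK' le_rfl]
                show grid A (min i K) L = grid A i L
                rw [min_eq_left hiK'.le]
            | succ u ihu =>
                intro j' h1 h2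
                by_cases hju : L - u ≤ j'
                · exact ihu j' hju h2
                · have hjL : j' < L := by omega
                  rw [bgrid_step hiK' hjL,
                    ih (i+1) (by omega) (by omega) j' (by omega),
                    ih (i+1) (by omega) (by omega) (j'+1) (by omega),
                    ihu (j'+1) (by omega) (by omega),
                    grid_succ_succ]
                  exact Finvp_F (grid_dec A i j') (grid_dec A (i+1) j')
                    (grid_dec A i (j'+1)) (grid_hs_col A i j') (grid_hs_row A i j')
          exact inner (L - j + 1) j (by omega) hj
  exact fun i hi j hj => main (K - i + 1) i (by omega) hi j hj

lemma bmat_of_grid (A : ℕ → ℕ → ℕ) (K L : ℕ) {i j : ℕ} (hi : i < K) (hj : j < L) :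
    bmat (fun j' => grid A K (min j' L)) (fun i' => grid A (min i' K) L) K L i j
      = A i j := by
  unfold bmat
  rw [bgrid_of_grid A K L (i+1) (by omega) j (by omega),
    bgrid_of_grid A K L i (by omega) (j+1) (by omega),
    bgrid_of_grid A K L (i+1) (by omega) (j+1) (by omega),
    grid_succ_succ]
  exact Finvk_F (grid_dec A i j) (grid_dec A (i+1) j)
    (grid_dec A i (j+1)) (grid_hs_col A i j) (grid_hs_row A i j)

section RT2

variable {gP gQ : ℕ → ℕ → ℕ} {f : ℕ → ℕ} {K L : ℕ}
variable (hQ0 : ∀ t, gQ 0 t = 0) (hQc : ∀ i, HS (gQ i) (gQ (i+1)))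
variable (hQe : ∀ i, K ≤ i → gQ i = f)
variable (hP0 : ∀ t, gP 0 t = 0) (hPc : ∀ j, HS (gP j) (gP (j+1)))
variable (hPe : ∀ j, L ≤ j → gP j = f)

include hQ0 hQc hQe hP0 hPc hPe

lemma grid_of_bgrid :
    ∀ i, i ≤ K → ∀ j, j ≤ L →
      grid (fun i' j' => if i' < K ∧ j' < L then bmat gP gQ K L i' j' else 0) i j
        = bgrid gP gQ K L i j := by
  set A' := fun i' j' => if i' < K ∧ j' < L then bmat gP gQ K L i' j' else 0 with hA'
  intro i
  induction i with
  | zero =>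
      intro _ j hj
      rw [grid_zero_row]
      funext t
      exact (bgrid_row0 hQ0 hQc hQe hP0 hPc hPe j t).symm
  | succ i ih =>
      intro hi j hj
      induction j with
      | zero =>
          rw [grid_zero_col]
          funext t
          exact (bgrid_supp hQ0 hQc hQe hP0 hPc hPe (i+1) 0 t (by omega)).symm
      | succ j ihj =>
          have hiK : i < K := by omega
          have hjL : j < L := by omega
          rw [grid_succ_succ, ih (by omega) j (by omega), ih (by omega) (j+1) (by omega),
            ihj (by omega)]
          have hAe : A' i j = bmat gP gQ K L i j := by
            rw [hA']; simp [hiK, hjL]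
          rw [hAe]
          exact bgrid_F hQ0 hQc hQe hP0 hPc hPe hiK hjL

end RT2

/-! ### down-closed finsets -/

lemma mem_iff_lt_card (S : Finset ℕ) (hdc : ∀ a b, a ≤ b → b ∈ S → a ∈ S) (x : ℕ) :
    x ∈ S ↔ x < S.card := by
  constructor
  · intro hx
    have hsub : Finset.range (x+1) ⊆ S := by
      intro y hy
      exact hdc y x (by simpa using Nat.lt_succ_iff.mp (Finset.mem_range.mp hy)) hx
    have := Finset.card_le_card hsub
    simpa using this
  · intro hx
    by_contra hxS
    have hsub : S ⊆ Finset.range x := by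
      intro y hy
      rcases lt_or_ge y x with h | h
      · exact Finset.mem_range.mpr h
      · exact absurd (hdc x y h hy) hxS
    have := Finset.card_le_card hsub
    simp at this
    omega

lemma mono_of_step {g : ℕ → ℕ} {N : ℕ} (h : ∀ j, j + 1 < N → g j ≤ g (j+1)) :
    ∀ a b, a ≤ b → b < N → g a ≤ g b := by
  intro a b hab hbN
  induction b with
  | zero => have : a = 0 := by omega
            rw [this]
  | succ b ih =>
      rcases Nat.eq_or_lt_of_le hab with h1 | h1
      · rw [h1]
      · exact le_trans (ih (by omega) (by omega)) (h b hbN)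

lemma dec_mono {f : ℕ → ℕ} (hf : Dec f) : ∀ a b, a ≤ b → f b ≤ f a := by
  intro a b hab
  induction b with
  | zero => have : a = 0 := by omega
            rw [this]
  | succ b ih =>
      rcases Nat.eq_or_lt_of_le hab with h1 | h1
      · rw [h1]
      · exact le_trans (hf b) (ih (by omega))

/-! ### SSYT and chains -/

/-- the subtype counted by `kostka` -/
def SSYTt (s c : List ℕ) : Type :=
  {T : ℕ → ℕ → ℕ //
    (∀ i j, ¬ j < s.getD i 0 → T i j = 0) ∧
    (∀ i j, j < s.getD i 0 → 1 ≤ T i j) ∧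
    (∀ i j, j + 1 < s.getD i 0 → T i j ≤ T i (j + 1)) ∧
    (∀ i j, j < s.getD (i + 1) 0 → T i j < T (i + 1) j) ∧
    (∀ m : ℕ, (∑ i ∈ Finset.range s.length,
        ((Finset.range (s.getD i 0)).filter (fun j => T i j = m + 1)).card)
      = c.getD m 0)}

/-- horizontal-strip chains of partitions with prescribed increments `c`
and endpoint `f`, measured with cutoff `B` -/
def ChainT (B : ℕ) (c : List ℕ) (f : ℕ → ℕ) : Type :=
  {g : ℕ → ℕ → ℕ //
    (∀ t, g 0 t = 0) ∧ (∀ i, HS (g i) (g (i+1))) ∧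
    (∀ i, sz (g (i+1)) B = sz (g i) B + c.getD i 0) ∧
    (∀ i, c.length ≤ i → g i = f)}

section SSYTChain

variable {s c : List ℕ} {B : ℕ}

/-- chain associated to a tableau -/
def toChain (T : ℕ → ℕ → ℕ) (m t : ℕ) : ℕ :=
  ((Finset.range (s.getD t 0)).filter (fun j => T t j ≤ m)).card

variable {T : ℕ → ℕ → ℕ}
variable (hT1 : ∀ i j, ¬ j < s.getD i 0 → T i j = 0)
variable (hT2 : ∀ i j, j < s.getD i 0 → 1 ≤ T i j)
variable (hT3 : ∀ i j, j + 1 < s.getD i 0 → T i j ≤ T i (j + 1))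
variable (hT4 : ∀ i j, j < s.getD (i + 1) 0 → T i j < T (i + 1) j)
variable (hT5 : ∀ m : ℕ, (∑ i ∈ Finset.range s.length,
    ((Finset.range (s.getD i 0)).filter (fun j => T i j = m + 1)).card) = c.getD m 0)
variable (hdec : Dec (fun t => s.getD t 0))
variable (hsB : s.length ≤ B)

/-- entries of the tableau are bounded by the number of content entries -/
lemma T_le (ht2 : ∀ i j, j < s.getD i 0 → 1 ≤ T i j)
    (ht5 : ∀ m : ℕ, (∑ i ∈ Finset.range s.length,
      ((Finset.range (s.getD i 0)).filter (fun j => T i j = m + 1)).card) = c.getD m 0)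
    {t j : ℕ} (hj : j < s.getD t 0) : T t j ≤ c.length := by
  by_contra h
  push_neg at h
  -- T t j = v with v ≥ c.length + 1
  set v := T t j with hv
  have hv1 : 1 ≤ v := ht2 t j hj
  have h5 := ht5 (v - 1)
  have hge : c.length ≤ v - 1 := by omega
  rw [List.getD_eq_default _ _ hge] at h5
  have htlen : t < s.length := by
    by_contra htl
    push_neg at htl
    rw [List.getD_eq_default _ _ htl] at hj
    omega
  have hterm : ((Finset.range (s.getD t 0)).filter (fun j' => T t j' = (v-1) + 1)).card = 0 :=
    Finset.sum_eq_zero_iff.mp h5 t (Finset.mem_range.mpr htlen)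
  have hjmem : j ∈ (Finset.range (s.getD t 0)).filter (fun j' => T t j' = (v-1)+1) := by
    simp only [Finset.mem_filter, Finset.mem_range]
    exact ⟨hj, by omega⟩
  rw [Finset.card_eq_zero] at hterm
  rw [hterm] at hjmem
  exact absurd hjmem (Finset.notMem_empty j)

include hT3 in
/-- prefix characterisation -/
lemma toChain_prefix {t m j : ℕ} (hj : j < s.getD t 0) :
    T t j ≤ m ↔ j < toChain (s := s) T m t := by
  have key := mem_iff_lt_card ((Finset.range (s.getD t 0)).filter (fun j' => T t j' ≤ m))
    (by
      intro a b hab hb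
      simp only [Finset.mem_filter, Finset.mem_range] at hb ⊢
      refine ⟨by omega, le_trans ?_ hb.2⟩
      exact mono_of_step (fun j' hj' => hT3 t j' hj') a b hab hb.1) j
  simp only [Finset.mem_filter, Finset.mem_range] at key
  unfold toChain
  constructor
  · intro h; exact key.mp ⟨hj, h⟩
  · intro h; exact (key.mpr h).2

include hT2 in
lemma toChain_zero (t : ℕ) : toChain (s := s) T 0 t = 0 := by
  unfold toChain
  rw [Finset.card_eq_zero, Finset.filter_eq_empty_iff]
  intro j hj
  have := hT2 t j (Finset.mem_range.mp hj)
  omega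

include hT3 hT4 hdec in
lemma toChain_hs (m : ℕ) : HS (toChain (s := s) T m) (toChain (s := s) T (m+1)) := by
  constructor
  · intro t
    apply Finset.card_le_card
    intro j hj
    simp only [Finset.mem_filter, Finset.mem_range] at hj ⊢
    exact ⟨hj.1, by omega⟩
  · intro t
    set a := toChain (s := s) T (m+1) (t+1) with ha
    rcases Nat.eq_zero_or_pos a with h | h
    · omega
    · have haf : a ≤ s.getD (t+1) 0 := by
        rw [ha]; unfold toChain
        exact le_trans (Finset.card_filter_le _ _) (by simp)
      have hj : a - 1 < s.getD (t+1) 0 := by omega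
      have h1 : T (t+1) (a-1) ≤ m + 1 :=
        (toChain_prefix hT3 hj).mpr (by omega)
      have h2 : T t (a-1) < T (t+1) (a-1) := hT4 t (a-1) hj
      have hjf : a - 1 < s.getD t 0 := lt_of_lt_of_le hj (hdec t)
      have h3 : a - 1 < toChain (s := s) T m t :=
        (toChain_prefix hT3 hjf).mp (by omega)
      omega

include hT3 in
lemma toChain_split (m t : ℕ) :
    toChain (s := s) T (m+1) t = toChain (s := s) T m t
      + ((Finset.range (s.getD t 0)).filter (fun j => T t j = m + 1)).card := by
  unfold toChain
  rw [← Finset.card_union_of_disjoint (by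
    rw [Finset.disjoint_left]
    intro j hj1 hj2
    simp only [Finset.mem_filter] at hj1 hj2
    omega)]
  congr 1
  ext j
  simp only [Finset.mem_union, Finset.mem_filter, Finset.mem_range]
  omega

include hT3 hT5 hsB in
lemma toChain_sz (m : ℕ) :
    sz (toChain (s := s) T (m+1)) B = sz (toChain (s := s) T m) B + c.getD m 0 := by
  unfold sz
  have h1 : ∀ t, toChain (s := s) T (m+1) t = toChain (s := s) T m t
      + ((Finset.range (s.getD t 0)).filter (fun j => T t j = m + 1)).card :=
    toChain_split hT3 m
  calc ∑ t ∈ Finset.range B, toChain (s := s) T (m+1) t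
      = ∑ t ∈ Finset.range B, (toChain (s := s) T m t
        + ((Finset.range (s.getD t 0)).filter (fun j => T t j = m + 1)).card) := by
        exact Finset.sum_congr rfl (fun t _ => h1 t)
    _ = (∑ t ∈ Finset.range B, toChain (s := s) T m t)
        + ∑ t ∈ Finset.range B, ((Finset.range (s.getD t 0)).filter
            (fun j => T t j = m + 1)).card := Finset.sum_add_distrib
    _ = _ := by
        congr 1
        rw [← hT5 m]
        symm
        apply Finset.sum_subset (Finset.range_subset_range.mpr hsB)
        intro t _ ht
        have : s.getD t 0 = 0 := List.getD_eq_default _ _ (by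
          simp only [Finset.mem_range, not_lt] at ht
          exact ht)
        rw [this]
        simp

include hT2 hT3 hT5 in
lemma toChain_end {m : ℕ} (hm : c.length ≤ m) :
    toChain (s := s) T m = fun t => s.getD t 0 := by
  funext t
  unfold toChain
  have : (Finset.range (s.getD t 0)).filter (fun j => T t j ≤ m)
      = Finset.range (s.getD t 0) := by
    apply Finset.filter_true_of_mem
    intro j hj
    have := T_le hT2 hT5 (Finset.mem_range.mp hj)
    omega
  rw [this, Finset.card_range]

end SSYTChain

/-! ### chain to tableau -/

/-- tableau associated to a chain -/
def toTab (f : ℕ → ℕ) (c : List ℕ) (g : ℕ → ℕ → ℕ) (t j : ℕ) : ℕ :=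
  if j < f t then ((Finset.range (c.length + 1)).filter (fun m => g m t ≤ j)).card else 0

section ChainSSYT

variable {c : List ℕ} {B : ℕ} {f : ℕ → ℕ} {g : ℕ → ℕ → ℕ}
variable (hg0 : ∀ t, g 0 t = 0) (hgc : ∀ i, HS (g i) (g (i+1)))
variable (hgs : ∀ i, sz (g (i+1)) B = sz (g i) B + c.getD i 0)
variable (hge : ∀ i, c.length ≤ i → g i = f)

include hgc in
lemma chain_mono_idx : ∀ t a b, a ≤ b → g a t ≤ g b t := by
  intro t a b hab
  induction b with
  | zero => have : a = 0 := by omega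
            rw [this]
  | succ b ih =>
      rcases Nat.eq_or_lt_of_le hab with h1 | h1
      · rw [h1]
      · exact le_trans (ih (by omega)) ((hgc b).1 t)

include hgc hge in
lemma chain_le_f : ∀ m t, g m t ≤ f t := by
  intro m t
  rcases le_or_gt m c.length with h | h
  · rw [← hge c.length le_rfl]
    exact chain_mono_idx hgc t m c.length h
  · rw [hge m h.le]

include hgc hge in
lemma toTab_key {t j m : ℕ} (hj : j < f t) (hm : m ≤ c.length) :
    (toTab f c g t j ≤ m ↔ j < g m t) := by
  have key := mem_iff_lt_card
    ((Finset.range (c.length + 1)).filter (fun m' => g m' t ≤ j))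
    (by
      intro a b hab hb
      simp only [Finset.mem_filter, Finset.mem_range] at hb ⊢
      exact ⟨by omega, le_trans (chain_mono_idx hgc t a b hab) hb.2⟩) m
  simp only [Finset.mem_filter, Finset.mem_range] at key
  unfold toTab
  rw [if_pos hj]
  constructor
  · intro h
    by_contra hc
    push_neg at hc
    have := key.mp ⟨by omega, hc⟩
    omega
  · intro h
    by_contra hc
    push_neg at hc
    have := (key.mpr (by omega)).2
    omega

include hg0 hgc hge in
lemma toTab_pos {t j : ℕ} (hj : j < f t) : 1 ≤ toTab f c g t j := by
  by_contra h
  push_neg at h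
  have h0 : toTab f c g t j ≤ 0 := by omega
  have := (toTab_key hgc hge hj (by omega)).mp h0
  rw [hg0] at this
  omega

include hgc hge in
lemma toTab_le {t j : ℕ} (hj : j < f t) : toTab f c g t j ≤ c.length := by
  have := (toTab_key hgc hge hj le_rfl).mpr (by rw [hge c.length le_rfl]; exact hj)
  exact this

include hgc hge in
lemma toTab_row_mono {t j : ℕ} (hj : j + 1 < f t) :
    toTab f c g t j ≤ toTab f c g t (j+1) := by
  unfold toTab
  rw [if_pos (by omega : j < f t), if_pos hj]
  apply Finset.card_le_card
  intro m hm
  simp only [Finset.mem_filter, Finset.mem_range] at hm ⊢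
  exact ⟨hm.1, by omega⟩

include hg0 hgc hge in
lemma toTab_col_strict {t j : ℕ} (hfdec : Dec f) (hj : j < f (t+1)) :
    toTab f c g t j < toTab f c g (t+1) j := by
  set v := toTab f c g (t+1) j with hv
  have hv1 : 1 ≤ v := toTab_pos hg0 hgc hge hj
  have hvK : v ≤ c.length := toTab_le hgc hge hj
  have h1 : j < g v (t+1) := (toTab_key hgc hge hj hvK).mp le_rfl
  have h2 : g v (t+1) ≤ g (v-1) t := by
    have := (hgc (v-1)).2 t
    have he : v - 1 + 1 = v := by omega
    rw [he] at this
    exact this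
  have hjt : j < f t := lt_of_lt_of_le hj (hfdec t)
  have h3 : toTab f c g t j ≤ v - 1 :=
    (toTab_key hgc hge hjt (by omega)).mpr (by omega)
  omega

include hgc hge in
lemma toTab_count {t m : ℕ} (hm : m + 1 ≤ c.length) :
    ((Finset.range (f t)).filter (fun j => toTab f c g t j = m + 1)).card + g m t
      = g (m+1) t := by
  have hIco : (Finset.range (f t)).filter (fun j => toTab f c g t j = m + 1)
      = Finset.Ico (g m t) (g (m+1) t) := by
    ext j
    simp only [Finset.mem_filter, Finset.mem_range, Finset.mem_Ico]
    constructor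
    · intro ⟨hjf, hTv⟩
      constructor
      · by_contra hc
        push_neg at hc
        have := (toTab_key hgc hge hjf (by omega)).mpr hc
        omega
      · exact (toTab_key hgc hge hjf hm).mp (by omega)
    · intro ⟨h1, h2⟩
      have hjf : j < f t := lt_of_lt_of_le h2 (chain_le_f hgc hge (m+1) t)
      constructor
      · exact hjf
      · have ha := (toTab_key hgc hge hjf hm).mpr h2
        have hb : ¬ (toTab f c g t j ≤ m) := by
          intro hc
          have := (toTab_key hgc hge hjf (by omega)).mp hc
          omega
        omega
  rw [hIco, Nat.card_Ico]
  have := chain_mono_idx hgc t m (m+1) (by omega)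
  omega

end ChainSSYT

section SSYTEquiv

variable {s c : List ℕ} {B : ℕ}

/-- the tableau–chain equivalence -/
noncomputable def ssytEquivChain (hdec : Dec (fun t => s.getD t 0)) (hsB : s.length ≤ B) :
    SSYTt s c ≃ ChainT B c (fun t => s.getD t 0) := by
  classical
  refine
  { toFun := fun T => ⟨toChain (s := s) T.1, ?_, ?_, ?_, ?_⟩
    invFun := fun g => ⟨toTab (fun t => s.getD t 0) c g.1, ?_, ?_, ?_, ?_, ?_⟩
    left_inv := ?_
    right_inv := ?_ }
  · exact toChain_zero T.2.2.1
  · exact fun i => toChain_hs T.2.2.2.1 T.2.2.2.2.1 hdec i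
  · exact fun i => toChain_sz T.2.2.2.1 T.2.2.2.2.2 hsB i
  · exact fun i hi => toChain_end T.2.2.1 T.2.2.2.1 T.2.2.2.2.2 hi
  · -- zeros outside the diagram
    intro i j hj
    unfold toTab
    rw [if_neg hj]
  · exact fun i j hj => toTab_pos g.2.1 g.2.2.1 g.2.2.2.2 hj
  · exact fun i j hj => toTab_row_mono g.2.2.1 g.2.2.2.2 hj
  · exact fun i j hj => toTab_col_strict g.2.1 g.2.2.1 g.2.2.2.2 hdec hj
  · -- content of toTab
    intro m
    rcases le_or_gt (m+1) c.length with hm | hm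
    · have key : ∀ t, ((Finset.range (s.getD t 0)).filter
          (fun j => toTab (fun t' => s.getD t' 0) c g.1 t j = m + 1)).card + g.1 m t
          = g.1 (m+1) t := fun t => toTab_count g.2.2.1 g.2.2.2.2 hm
      have hext : ∑ t ∈ Finset.range s.length, ((Finset.range (s.getD t 0)).filter
          (fun j => toTab (fun t' => s.getD t' 0) c g.1 t j = m + 1)).card
          = ∑ t ∈ Finset.range B, ((Finset.range (s.getD t 0)).filter
          (fun j => toTab (fun t' => s.getD t' 0) c g.1 t j = m + 1)).card := by
        apply Finset.sum_subset (Finset.range_subset_range.mpr hsB)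
        intro t _ ht
        have : s.getD t 0 = 0 := List.getD_eq_default _ _ (by
          simp only [Finset.mem_range, not_lt] at ht; exact ht)
        rw [this]
        simp
      have hsum : (∑ t ∈ Finset.range B, ((Finset.range (s.getD t 0)).filter
          (fun j => toTab (fun t' => s.getD t' 0) c g.1 t j = m + 1)).card)
          + sz (g.1 m) B = sz (g.1 (m+1)) B := by
        unfold sz
        rw [← Finset.sum_add_distrib]
        exact Finset.sum_congr rfl (fun t _ => key t)
      have hs := g.2.2.2.1 m
      omega
    · have hzero : ∀ t ∈ Finset.range s.length, ((Finset.range (s.getD t 0)).filter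
          (fun j => toTab (fun t' => s.getD t' 0) c g.1 t j = m + 1)).card = 0 := by
        intro t _
        rw [Finset.card_eq_zero, Finset.filter_eq_empty_iff]
        intro j hj
        have := toTab_le g.2.2.1 g.2.2.2.2 (Finset.mem_range.mp hj)
        omega
      rw [Finset.sum_congr rfl hzero]
      rw [List.getD_eq_default _ _ (by omega : c.length ≤ m)]
      simp
  · -- left inverse
    rintro ⟨T, hT1, hT2, hT3, hT4, hT5⟩
    apply Subtype.ext
    funext t j
    show toTab (fun t' => s.getD t' 0) c (toChain (s := s) T) t j = T t j
    have hg0 := toChain_zero (s := s) hT2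
    have hgc := fun i => toChain_hs (s := s) hT3 hT4 hdec i
    have hge := fun i hi => toChain_end (s := s) hT2 hT3 hT5 (m := i) hi
    rcases lt_or_ge j (s.getD t 0) with hj | hj
    · have hTle : T t j ≤ c.length := T_le hT2 hT5 hj
      have hT'le : toTab (fun t' => s.getD t' 0) c (toChain (s := s) T) t j ≤ c.length :=
        toTab_le hgc hge hj
      have iff1 : ∀ m, m ≤ c.length →
          (toTab (fun t' => s.getD t' 0) c (toChain (s := s) T) t j ≤ m ↔ T t j ≤ m) := by
        intro m hm
        rw [toTab_key hgc hge hj hm]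
        exact (toChain_prefix hT3 hj).symm
      have h1 := (iff1 _ hT'le).mp le_rfl
      have h2 := (iff1 _ hTle).mpr le_rfl
      omega
    · unfold toTab
      rw [if_neg (not_lt.mpr hj), hT1 t j (by omega)]
  · -- right inverse
    rintro ⟨g, hg0, hgc, hgs, hge⟩
    apply Subtype.ext
    funext m t
    show toChain (s := s) (toTab (fun t' => s.getD t' 0) c g) m t = g m t
    rcases le_or_gt m c.length with hm | hm
    · have : (Finset.range (s.getD t 0)).filter
          (fun j => toTab (fun t' => s.getD t' 0) c g t j ≤ m) = Finset.range (g m t) := by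
        ext j
        simp only [Finset.mem_filter, Finset.mem_range]
        constructor
        · intro ⟨hjf, hjm⟩
          exact (toTab_key hgc hge hjf hm).mp hjm
        · intro hj
          have hjf : j < s.getD t 0 := lt_of_lt_of_le hj (chain_le_f hgc hge m t)
          exact ⟨hjf, (toTab_key hgc hge hjf hm).mpr hj⟩
      unfold toChain
      rw [this, Finset.card_range]
    · have hfull : (Finset.range (s.getD t 0)).filter
          (fun j => toTab (fun t' => s.getD t' 0) c g t j ≤ m) = Finset.range (s.getD t 0) := by
        apply Finset.filter_true_of_mem
        intro j hj
        have := toTab_le hgc hge (Finset.mem_range.mp hj)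
        omega
      unfold toChain
      rw [hfull, Finset.card_range, hge m hm.le]

end SSYTEquiv

/-! ### lists and partitions -/

lemma list_sum_eq_sum_getD : ∀ (L : List ℕ), ∑ i ∈ Finset.range L.length, L.getD i 0 = L.sum := by
  intro L
  induction L with
  | nil => simp
  | cons a L ih =>
      rw [List.length_cons, Finset.sum_range_succ']
      simp only [List.getD_cons_succ, List.getD_cons_zero, List.sum_cons]
      omega

lemma list_length_le_sum : ∀ (L : List ℕ), (∀ x ∈ L, 1 ≤ x) → L.length ≤ L.sum := by
  intro L
  induction L with
  | nil => simp
  | cons a L ih =>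
      intro h
      rw [List.length_cons, List.sum_cons]
      have h1 := h a List.mem_cons_self
      have h2 := ih (fun x hx => h x (List.mem_cons_of_mem a hx))
      omega

/-- extension of a sorted list of parts to a function on ℕ -/
def pl {n : ℕ} (p : n.Partition) : ℕ → ℕ := fun t => (partsList p).getD t 0

lemma partsList_sorted {n : ℕ} (p : n.Partition) : List.Pairwise (· ≥ ·) (partsList p) :=
  Multiset.pairwise_sort _ _

lemma partsList_pos {n : ℕ} (p : n.Partition) : ∀ x ∈ partsList p, 1 ≤ x := by
  intro x hx
  exact p.parts_pos (by rwa [← Multiset.mem_sort (· ≥ ·)])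

lemma partsList_sum {n : ℕ} (p : n.Partition) : (partsList p).sum = n := by
  have h : (partsList p : Multiset ℕ) = p.parts := Multiset.sort_eq _ _
  calc (partsList p).sum = ((partsList p : Multiset ℕ)).sum := rfl
    _ = p.parts.sum := by rw [h]
    _ = n := p.parts_sum

lemma partsList_length_le {n : ℕ} (p : n.Partition) : (partsList p).length ≤ n := by
  have := list_length_le_sum (partsList p) (partsList_pos p)
  rw [partsList_sum p] at this
  exact this

lemma pl_dec {n : ℕ} (p : n.Partition) : Dec (pl p) := by
  intro i
  unfold pl
  rcases lt_or_ge (i+1) (partsList p).length with h | h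
  · have hs := partsList_sorted p
    rw [List.getD_eq_getElem _ _ h, List.getD_eq_getElem _ _ (by omega)]
    exact List.pairwise_iff_getElem.mp hs i (i+1) (by omega) h (by omega)
  · rw [List.getD_eq_default _ _ h]
    omega

lemma pl_supp {n : ℕ} (p : n.Partition) : ∀ t, n ≤ t → pl p t = 0 := by
  intro t ht
  unfold pl
  exact List.getD_eq_default _ _ (le_trans (partsList_length_le p) ht)

lemma pl_sum {n : ℕ} (p : n.Partition) {N : ℕ} (hN : n ≤ N) : sz (pl p) N = n := by
  unfold sz
  have h1 : ∑ i ∈ Finset.range (partsList p).length, (partsList p).getD i 0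
      = ∑ i ∈ Finset.range N, pl p i := by
    apply Finset.sum_subset (Finset.range_subset_range.mpr (le_trans (partsList_length_le p) hN))
    intro t _ ht
    exact List.getD_eq_default _ _ (by simpa using ht)
  rw [← h1, list_sum_eq_sum_getD, partsList_sum]

lemma pl_pos_iff {n : ℕ} (p : n.Partition) (t : ℕ) :
    pl p t ≠ 0 ↔ t < (partsList p).length := by
  constructor
  · intro h
    by_contra hc
    exact h (List.getD_eq_default _ _ (by omega))
  · intro h
    unfold pl
    rw [List.getD_eq_getElem _ _ h]
    have := partsList_pos p _ (List.getElem_mem h)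
    omega

lemma pl_inj {n : ℕ} : Function.Injective (pl (n := n)) := by
  intro p q hpq
  have hlen : (partsList p).length = (partsList q).length := by
    by_contra hc
    rcases Nat.lt_or_ge (partsList p).length (partsList q).length with h | h
    · have h1 := (pl_pos_iff q (partsList p).length).mpr h
      rw [← hpq] at h1
      exact h1 (List.getD_eq_default _ _ le_rfl)
    · have hq : (partsList q).length < (partsList p).length := by omega
      have h1 := (pl_pos_iff p (partsList q).length).mpr hq
      rw [hpq] at h1
      exact h1 (List.getD_eq_default _ _ le_rfl)
  have hlist : partsList p = partsList q := by
    apply List.ext_getElem hlen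
    intro t h1 h2
    have := congrFun hpq t
    unfold pl at this
    rwa [List.getD_eq_getElem _ _ h1, List.getD_eq_getElem _ _ h2] at this
  apply Nat.Partition.ext
  calc p.parts = ((partsList p : List ℕ) : Multiset ℕ) := (Multiset.sort_eq _ _).symm
    _ = ((partsList q : List ℕ) : Multiset ℕ) := by rw [hlist]
    _ = q.parts := Multiset.sort_eq _ _

/-! ### building a partition from a decreasing function -/

lemma list_map_range_sum (f : ℕ → ℕ) : ∀ m, (((List.range m).map f).sum) = sz f m := by
  intro m
  induction m with
  | zero => simp [sz]
  | succ m ih =>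
      rw [List.range_succ, List.map_append, List.sum_append, sz_succ]
      simp [ih]

/-- number of nonzero values -/
def suppCard (f : ℕ → ℕ) (N : ℕ) : ℕ := ((Finset.range N).filter (fun t => f t ≠ 0)).card

lemma supp_iff {f : ℕ → ℕ} {N : ℕ} (hdec : Dec f) (h0 : ∀ t, N ≤ t → f t = 0) :
    ∀ t, f t ≠ 0 ↔ t < suppCard f N := by
  intro t
  have key := mem_iff_lt_card ((Finset.range N).filter (fun t => f t ≠ 0))
    (by
      intro a b hab hb
      simp only [Finset.mem_filter, Finset.mem_range] at hb ⊢
      have := dec_mono hdec a b hab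
      exact ⟨by omega, by omega⟩) t
  simp only [Finset.mem_filter, Finset.mem_range] at key
  unfold suppCard
  constructor
  · intro h
    refine key.mp ⟨?_, h⟩
    by_contra hc
    exact h (h0 t (by omega))
  · intro h
    exact (key.mpr h).2

lemma suppCard_le {f : ℕ → ℕ} {N : ℕ} : suppCard f N ≤ N := by
  unfold suppCard
  exact le_trans (Finset.card_filter_le _ _) (by simp)

/-- the partition of `n` determined by a decreasing function summing to `n` -/
def toPart (f : ℕ → ℕ) (n : ℕ) (hdec : Dec f) (h0 : ∀ t, n ≤ t → f t = 0)
    (hsum : sz f n = n) : n.Partition where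
  parts := (((List.range (suppCard f n)).map f : List ℕ) : Multiset ℕ)
  parts_pos := by
    intro i hi
    simp only [Multiset.mem_coe, List.mem_map, List.mem_range] at hi
    obtain ⟨t, ht, rfl⟩ := hi
    have := (supp_iff hdec h0 t).mpr ht
    omega
  parts_sum := by
    show (((List.range (suppCard f n)).map f).sum) = n
    calc ((List.range (suppCard f n)).map f).sum
        = sz f (suppCard f n) := list_map_range_sum f _
      _ = sz f n := by
          unfold sz
          apply Finset.sum_subset (Finset.range_subset_range.mpr suppCard_le)
          intro t _ ht
          have hiff := supp_iff hdec h0 t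
          simp only [Finset.mem_range, not_lt] at ht
          by_contra hc
          have := hiff.mp hc
          omega
      _ = n := hsum

lemma toPart_sorted {f : ℕ → ℕ} (hdec : Dec f) (m : ℕ) :
    List.Pairwise (· ≥ ·) ((List.range m).map f) := by
  rw [List.pairwise_map]
  exact (List.pairwise_lt_range (n := m)).imp (fun h => dec_mono hdec _ _ (le_of_lt h))

lemma pl_toPart {f : ℕ → ℕ} {n : ℕ} (hdec : Dec f) (h0 : ∀ t, n ≤ t → f t = 0)
    (hsum : sz f n = n) : pl (toPart f n hdec h0 hsum) = f := by
  have hL : partsList (toPart f n hdec h0 hsum) = (List.range (suppCard f n)).map f := by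
    exact List.Perm.eq_of_pairwise' (partsList_sorted _)
      (toPart_sorted hdec _) (Multiset.coe_eq_coe.mp (Multiset.sort_eq _ _))
  funext t
  unfold pl
  rw [hL]
  rcases lt_or_ge t (suppCard f n) with h | h
  · rw [List.getD_eq_getElem _ _ (by simpa using h)]
    simp
  · rw [List.getD_eq_default _ _ (by simpa using h)]
    have := supp_iff hdec h0 t
    by_contra hc
    have h2 := this.mp (fun hcc => hc hcc.symm)
    omega

/-! ### finiteness of chains -/

lemma chainT_finite {B M : ℕ} {c : List ℕ} {f : ℕ → ℕ}
    (hKB : c.length ≤ B) (hfM : ∀ t, f t ≤ M) : Finite (ChainT B c f) := by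
  apply Finite.of_injective
    (fun (g : ChainT B c f) (p : Fin (c.length + 1) × Fin B) => (⟨g.1 p.1 p.2,
      Nat.lt_succ_of_le (le_trans (chain_le_f g.2.2.1 g.2.2.2.2 p.1 p.2) (hfM p.2))⟩
        : Fin (M+1)))
  intro g g' h
  apply Subtype.ext
  funext i t
  rcases le_or_gt i c.length with hi | hi
  · rcases lt_or_ge t B with ht | ht
    · have := congrFun h (⟨i, by omega⟩, ⟨t, ht⟩)
      simpa using this
    · rw [chain_supp g.2.1 g.2.2.1 i t (by omega),
        chain_supp g'.2.1 g'.2.2.1 i t (by omega)]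
  · rw [g.2.2.2.2 i hi.le, g'.2.2.2.2 i hi.le]

/-! ### pairs of chains -/

/-- conditions for a chain of partitions with increments `c` (cutoff `n+1`) -/
def PCond (n : ℕ) (c : List ℕ) (g : ℕ → ℕ → ℕ) : Prop :=
  (∀ t, g 0 t = 0) ∧ (∀ i, HS (g i) (g (i+1))) ∧
  (∀ i, sz (g (i+1)) (n+1) = sz (g i) (n+1) + c.getD i 0) ∧
  (∀ i, c.length ≤ i → g i = g c.length)

/-- pairs of chains with the same endpoint -/
def PairChains (n : ℕ) (μL νL : List ℕ) : Type :=
  {p : (ℕ → ℕ → ℕ) × (ℕ → ℕ → ℕ) //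
    PCond n μL p.1 ∧ PCond n νL p.2 ∧ p.1 μL.length = p.2 νL.length}

lemma pcond_sz (n : ℕ) (c : List ℕ) (g : ℕ → ℕ → ℕ) (h : PCond n c g) :
    ∀ i, sz (g i) (n+1) = ∑ i' ∈ Finset.range i, c.getD i' 0 := by
  intro i
  induction i with
  | zero =>
      simp only [Finset.range_zero, Finset.sum_empty]
      unfold sz
      apply Finset.sum_eq_zero
      intro t _
      exact h.1 t
  | succ i ih =>
      rw [h.2.2.1 i, ih, Finset.sum_range_succ]

/-- the zero-extension of a finite matrix -/
def mext (K L : ℕ) (A : Matrix (Fin K) (Fin L) ℕ) : ℕ → ℕ → ℕ :=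
  fun i j => if h : i < K ∧ j < L then A ⟨i, h.1⟩ ⟨j, h.2⟩ else 0

lemma mext_row_sum {K L : ℕ} (A : Matrix (Fin K) (Fin L) ℕ) {i : ℕ} (hi : i < K) :
    ∑ j' ∈ Finset.range L, mext K L A i j' = ∑ j, A ⟨i, hi⟩ j := by
  rw [← Fin.sum_univ_eq_sum_range]
  apply Finset.sum_congr rfl
  intro j _
  unfold mext
  rw [dif_pos ⟨hi, j.isLt⟩]

lemma mext_col_sum {K L : ℕ} (A : Matrix (Fin K) (Fin L) ℕ) {j : ℕ} (hj : j < L) :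
    ∑ i' ∈ Finset.range K, mext K L A i' j = ∑ i, A i ⟨j, hj⟩ := by
  rw [← Fin.sum_univ_eq_sum_range]
  apply Finset.sum_congr rfl
  intro i _
  unfold mext
  rw [dif_pos ⟨i.isLt, hj⟩]

/-! ### the matrix–chains equivalence -/

lemma pcondQ_grid {n K L : ℕ} (hK : K ≤ n) {c : List ℕ} (hc : c.length = K)
    (A : ℕ → ℕ → ℕ)
    (hrow : ∀ i, i < K → ∑ j' ∈ Finset.range L, A i j' = c.getD i 0) :
    PCond n c (fun i => grid A (min i K) L) := by
  refine ⟨?_, ?_, ?_, ?_⟩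
  · intro t
    show grid A (min 0 K) L t = 0
    rw [Nat.zero_min]
    rfl
  · intro i
    show HS (grid A (min i K) L) (grid A (min (i+1) K) L)
    rcases le_or_gt (i+1) K with h | h
    · rw [min_eq_left (by omega), min_eq_left h]
      exact grid_hs_col _ i L
    · rw [min_eq_right (by omega), min_eq_right (by omega)]
      exact hs_self (grid_dec _ K L)
  · intro i
    show sz (grid A (min (i+1) K) L) (n+1) = sz (grid A (min i K) L) (n+1) + c.getD i 0
    rcases lt_or_ge i K with h | h
    · rw [min_eq_left (by omega), min_eq_left (by omega)]
      have h1 := grid_row_sum A (i := i) (N := n) (by omega) L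
      have h2 := hrow i h
      omega
    · rw [min_eq_right (by omega), min_eq_right (by omega),
        List.getD_eq_default _ _ (by omega)]
      omega
  · intro i hi
    show grid A (min i K) L = grid A (min c.length K) L
    rw [hc, min_self, min_eq_right (by omega)]

lemma pcondP_grid {n K L : ℕ} (hK : K ≤ n) {c : List ℕ} (hc : c.length = L)
    (A : ℕ → ℕ → ℕ)
    (hcol : ∀ j, j < L → ∑ i' ∈ Finset.range K, A i' j = c.getD j 0) :
    PCond n c (fun j => grid A K (min j L)) := by
  refine ⟨?_, ?_, ?_, ?_⟩
  · intro t
    show grid A K (min 0 L) t = 0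
    rw [Nat.zero_min, grid_zero_col]
  · intro j
    show HS (grid A K (min j L)) (grid A K (min (j+1) L))
    rcases le_or_gt (j+1) L with h | h
    · rw [min_eq_left (by omega), min_eq_left h]
      exact grid_hs_row _ K j
    · rw [min_eq_right (by omega), min_eq_right (by omega)]
      exact hs_self (grid_dec _ K L)
  · intro j
    show sz (grid A K (min (j+1) L)) (n+1) = sz (grid A K (min j L)) (n+1) + c.getD j 0
    rcases lt_or_ge j L with h | h
    · rw [min_eq_left (by omega), min_eq_left (by omega)]
      have h1 := grid_col_sum A (j := j) (N := n) K hK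
      have h2 := hcol j h
      omega
    · rw [min_eq_right (by omega), min_eq_right (by omega),
        List.getD_eq_default _ _ (by omega)]
      omega
  · intro j hj
    show grid A K (min j L) = grid A K (min c.length L)
    rw [hc, min_self, min_eq_right (by omega)]

section BmatSums

variable {gP gQ : ℕ → ℕ → ℕ} {K L n : ℕ} {cμ cν : List ℕ}
variable (hQ : PCond n cμ gQ) (hP : PCond n cν gP)
variable (hKc : cμ.length = K) (hLc : cν.length = L)
variable (hcompat : gQ K = gP L) (hL : L ≤ n) (hKn : K ≤ n)

include hQ hP hKc hLc hcompat hL hKn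

lemma bmat_row_sums {i : ℕ} (hi : i < K) :
    ∑ j' ∈ Finset.range L, bmat gP gQ K L i j' = cμ.getD i 0 := by
  have hQe : ∀ i', K ≤ i' → gQ i' = gQ K := by
    intro i' hi'
    rw [hQ.2.2.2 i' (by omega), hKc]
  have hPe : ∀ j', L ≤ j' → gP j' = gQ K := by
    intro j' hj'
    rw [hP.2.2.2 j' (by omega), hLc, ← hcompat]
  have h1 := brow_sum hQ.1 hQ.2.1 hQe hP.1 hP.2.1 hPe (i := i) (N := n) hi hL L le_rfl
  have h2 : bgrid gP gQ K L i L = gQ i := bgrid_right hi le_rfl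
  have h3 : bgrid gP gQ K L (i+1) L = gQ (i+1) := by
    rcases lt_or_ge (i+1) K with h | h
    · exact bgrid_right h le_rfl
    · have e : i + 1 = K := by omega
      rw [bgrid_right' hQ.1 hQ.2.1 hQe hP.1 hP.2.1 hPe (i+1) le_rfl,
        min_eq_right (by omega), e]
  have h4 := hQ.2.2.1 i
  rw [h2, h3] at h1
  omega

lemma bmat_col_sums {j : ℕ} (hj : j < L) :
    ∑ i' ∈ Finset.range K, bmat gP gQ K L i' j = cν.getD j 0 := by
  have hQe : ∀ i', K ≤ i' → gQ i' = gQ K := by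
    intro i' hi'
    rw [hQ.2.2.2 i' (by omega), hKc]
  have hPe : ∀ j', L ≤ j' → gP j' = gQ K := by
    intro j' hj'
    rw [hP.2.2.2 j' (by omega), hLc, ← hcompat]
  have h1 := bcol_sum hQ.1 hQ.2.1 hQe hP.1 hP.2.1 hPe (j := j) (N := n) hj hL K le_rfl
  have h2 : bgrid gP gQ K L K j = gP j := by
    rw [bgrid_top le_rfl, min_eq_left (by omega)]
  have h3 : bgrid gP gQ K L K (j+1) = gP (j+1) := by
    rw [bgrid_top le_rfl, min_eq_left (by omega)]
  have h4 := hP.2.2.1 j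
  rw [h2, h3] at h1
  omega

end BmatSums

noncomputable def matEquivPairs (n : ℕ) (μ ν : n.Partition) :
    {A : Matrix (Fin (partsList μ).length) (Fin (partsList ν).length) ℕ //
      (∀ i, ∑ j, A i j = (partsList μ).get i) ∧ (∀ j, ∑ i, A i j = (partsList ν).get j)}
      ≃ PairChains n (partsList μ) (partsList ν) := by
  classical
  have hK : (partsList μ).length ≤ n := partsList_length_le μ
  have hL : (partsList ν).length ≤ n := partsList_length_le ν
  have hget : ∀ (i : ℕ) (hi : i < (partsList μ).length), (partsList μ).get ⟨i, hi⟩ = (partsList μ).getD i 0 := by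
    intro i hi
    rw [List.getD_eq_getElem _ _ hi]
    rfl
  have hget' : ∀ (j : ℕ) (hj : j < (partsList ν).length), (partsList ν).get ⟨j, hj⟩ = (partsList ν).getD j 0 := by
    intro j hj
    rw [List.getD_eq_getElem _ _ hj]
    rfl
  refine
  { toFun := fun A => ⟨(fun i => grid (mext (partsList μ).length (partsList ν).length A.1) (min i (partsList μ).length) (partsList ν).length,
      fun j => grid (mext (partsList μ).length (partsList ν).length A.1) (partsList μ).length (min j (partsList ν).length)), ?_, ?_, ?_⟩
    invFun := fun p => ⟨fun i j => bmat p.1.2 p.1.1 (partsList μ).length (partsList ν).length ↑i ↑j, ?_, ?_⟩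
    left_inv := ?_
    right_inv := ?_ }
  · exact pcondQ_grid hK rfl (mext (partsList μ).length (partsList ν).length A.1)
      (fun i hi => by rw [mext_row_sum A.1 hi, A.2.1 ⟨i, hi⟩, hget i hi])
  · exact pcondP_grid hK rfl (mext (partsList μ).length (partsList ν).length A.1)
      (fun j hj => by rw [mext_col_sum A.1 hj, A.2.2 ⟨j, hj⟩, hget' j hj])
  · show grid (mext (partsList μ).length (partsList ν).length A.1) (min (partsList μ).length (partsList μ).length) (partsList ν).length = grid (mext (partsList μ).length (partsList ν).length A.1) (partsList μ).length (min (partsList ν).length (partsList ν).length)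
    rw [min_self, min_self]
  · -- row sums
    intro i
    have h1 := bmat_row_sums p.2.1 p.2.2.1 rfl rfl p.2.2.2 hL hK i.isLt
    have h2 : ∑ j : Fin (partsList ν).length, bmat p.1.2 p.1.1 (partsList μ).length (partsList ν).length ↑i ↑j
        = ∑ j' ∈ Finset.range (partsList ν).length, bmat p.1.2 p.1.1 (partsList μ).length (partsList ν).length ↑i j' :=
      Fin.sum_univ_eq_sum_range _ (partsList ν).length
    show ∑ j : Fin (partsList ν).length, bmat p.1.2 p.1.1 (partsList μ).length (partsList ν).length ↑i ↑j = (partsList μ).get i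
    have h3 : (partsList μ).get i = (partsList μ).getD ↑i 0 := by
      rw [List.getD_eq_getElem _ _ i.isLt]
      rfl
    omega
  · -- col sums
    intro j
    have h1 := bmat_col_sums p.2.1 p.2.2.1 rfl rfl p.2.2.2 hL hK j.isLt
    have h2 : ∑ i : Fin (partsList μ).length, bmat p.1.2 p.1.1 (partsList μ).length (partsList ν).length ↑i ↑j
        = ∑ i' ∈ Finset.range (partsList μ).length, bmat p.1.2 p.1.1 (partsList μ).length (partsList ν).length i' ↑j :=
      Fin.sum_univ_eq_sum_range (fun i' => bmat p.1.2 p.1.1 (partsList μ).length (partsList ν).length i' ↑j) (partsList μ).length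
    show ∑ i : Fin (partsList μ).length, bmat p.1.2 p.1.1 (partsList μ).length (partsList ν).length ↑i ↑j = (partsList ν).get j
    have h3 : (partsList ν).get j = (partsList ν).getD ↑j 0 := by
      rw [List.getD_eq_getElem _ _ j.isLt]
      rfl
    omega
  · -- left inverse
    intro A
    apply Subtype.ext
    funext i j
    show bmat (fun j' => grid (mext (partsList μ).length (partsList ν).length A.1) (partsList μ).length (min j' (partsList ν).length))
      (fun i' => grid (mext (partsList μ).length (partsList ν).length A.1) (min i' (partsList μ).length) (partsList ν).length) (partsList μ).length (partsList ν).length ↑i ↑j = A.1 i j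
    rw [bmat_of_grid (mext (partsList μ).length (partsList ν).length A.1) (partsList μ).length (partsList ν).length i.isLt j.isLt]
    unfold mext
    rw [dif_pos ⟨i.isLt, j.isLt⟩]
  · -- right inverse
    intro p
    have hQe : ∀ i', (partsList μ).length ≤ i' → p.1.1 i' = p.1.1 (partsList μ).length := by
      intro i' hi'
      rw [p.2.1.2.2.2 i' (by omega)]
    have hPe : ∀ j', (partsList ν).length ≤ j' → p.1.2 j' = p.1.1 (partsList μ).length := by
      intro j' hj'
      rw [p.2.2.1.2.2.2 j' (by omega)]
      show p.1.2 (partsList ν).length = p.1.1 (partsList μ).length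
      rw [← p.2.2.2]
    have hQ0 := p.2.1.1
    have hQc := p.2.1.2.1
    have hP0 := p.2.2.1.1
    have hPc := p.2.2.1.2.1
    have hext : mext (partsList μ).length (partsList ν).length (fun (i : Fin (partsList μ).length) (j : Fin (partsList ν).length) => bmat p.1.2 p.1.1 (partsList μ).length (partsList ν).length ↑i ↑j)
        = fun i' j' => if i' < (partsList μ).length ∧ j' < (partsList ν).length then bmat p.1.2 p.1.1 (partsList μ).length (partsList ν).length i' j' else 0 := by
      funext i' j'
      unfold mext
      by_cases h : i' < (partsList μ).length ∧ j' < (partsList ν).length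
      · rw [dif_pos h, if_pos h]
      · rw [dif_neg h, if_neg h]
    have hgb := grid_of_bgrid hQ0 hQc hQe hP0 hPc hPe
    apply Subtype.ext
    show (fun i => grid (mext (partsList μ).length (partsList ν).length (fun (i : Fin (partsList μ).length) (j : Fin (partsList ν).length) => bmat p.1.2 p.1.1 (partsList μ).length (partsList ν).length ↑i ↑j)) (min i (partsList μ).length) (partsList ν).length,
      fun j => grid (mext (partsList μ).length (partsList ν).length (fun (i : Fin (partsList μ).length) (j : Fin (partsList ν).length) => bmat p.1.2 p.1.1 (partsList μ).length (partsList ν).length ↑i ↑j)) (partsList μ).length (min j (partsList ν).length)) = p.1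
    rw [hext]
    have e1 : (fun i => grid (fun i' j' => if i' < (partsList μ).length ∧ j' < (partsList ν).length then bmat p.1.2 p.1.1 (partsList μ).length (partsList ν).length i' j' else 0) (min i (partsList μ).length) (partsList ν).length) = p.1.1 := by
      funext i
      rw [hgb (min i (partsList μ).length) (by omega) (partsList ν).length le_rfl]
      rcases lt_or_ge i (partsList μ).length with h | h
      · rw [min_eq_left h.le]
        exact bgrid_right h le_rfl
      · rw [min_eq_right h,
          bgrid_right' hQ0 hQc hQe hP0 hPc hPe (partsList μ).length le_rfl, min_self, hQe i h]
    have e2 : (fun j => grid (fun i' j' => if i' < (partsList μ).length ∧ j' < (partsList ν).length then bmat p.1.2 p.1.1 (partsList μ).length (partsList ν).length i' j' else 0) (partsList μ).length (min j (partsList ν).length)) = p.1.2 := by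
      funext j
      rw [hgb (partsList μ).length le_rfl (min j (partsList ν).length) (by omega), bgrid_top le_rfl, min_assoc, min_self]
      rcases le_or_gt j (partsList ν).length with h | h
      · rw [min_eq_left h]
      · rw [min_eq_right h.le, p.2.2.1.2.2.2 j (by omega)]
    rw [e1, e2]

/-! ### fibering pairs of chains over the endpoint partition -/

section Fiber

variable {n : ℕ} (μ ν : n.Partition)

lemma pc_dec (x : PairChains n (partsList μ) (partsList ν)) :
    Dec (x.1.1 (partsList μ).length) :=
  chain_dec x.2.1.1 x.2.1.2.1 _

lemma pc_supp (x : PairChains n (partsList μ) (partsList ν)) :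
    ∀ t, n ≤ t → x.1.1 (partsList μ).length t = 0 := fun t ht =>
  chain_supp x.2.1.1 x.2.1.2.1 _ t (le_trans (partsList_length_le μ) ht)

lemma pc_sum (x : PairChains n (partsList μ) (partsList ν)) :
    sz (x.1.1 (partsList μ).length) n = n := by
  have h1 := pcond_sz n (partsList μ) x.1.1 x.2.1 (partsList μ).length
  rw [list_sum_eq_sum_getD, partsList_sum] at h1
  have h2 := sz_succ (x.1.1 (partsList μ).length) n
  have h3 := pc_supp μ ν x n le_rfl
  omega

/-- the endpoint partition of a pair of chains -/
noncomputable def epPart (x : PairChains n (partsList μ) (partsList ν)) : n.Partition :=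
  toPart (x.1.1 (partsList μ).length) n (pc_dec μ ν x) (pc_supp μ ν x) (pc_sum μ ν x)

lemma pl_epPart (x : PairChains n (partsList μ) (partsList ν)) :
    pl (epPart μ ν x) = x.1.1 (partsList μ).length := pl_toPart _ _ _

/-- the fiber of `epPart` over `l` is a pair of chains with endpoint `pl l` -/
noncomputable def fiberEquiv (l : n.Partition) :
    {x : PairChains n (partsList μ) (partsList ν) // epPart μ ν x = l}
      ≃ ChainT (n+1) (partsList μ) (pl l) × ChainT (n+1) (partsList ν) (pl l) := by
  refine
  { toFun := fun x => (⟨x.1.1.1, x.1.2.1.1, x.1.2.1.2.1, x.1.2.1.2.2.1, ?_⟩,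
      ⟨x.1.1.2, x.1.2.2.1.1, x.1.2.2.1.2.1, x.1.2.2.1.2.2.1, ?_⟩)
    invFun := fun c => ⟨⟨(c.1.1, c.2.1), ⟨c.1.2.1, c.1.2.2.1, c.1.2.2.2.1, ?_⟩,
      ⟨c.2.2.1, c.2.2.2.1, c.2.2.2.2.1, ?_⟩, ?_⟩, ?_⟩
    left_inv := ?_
    right_inv := ?_ }
  · -- μ chain endpoint
    intro i hi
    rw [x.1.2.1.2.2.2 i hi, ← pl_epPart μ ν x.1, x.2]
  · -- ν chain endpoint
    intro j hj
    rw [x.1.2.2.1.2.2.2 j hj, ← x.1.2.2.2, ← pl_epPart μ ν x.1, x.2]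
  · -- recovered PCond endpoint, μ side
    intro i hi
    show c.1.1 i = c.1.1 (partsList μ).length
    rw [c.1.2.2.2.2 i hi, c.1.2.2.2.2 (partsList μ).length le_rfl]
  · -- recovered PCond endpoint, ν side
    intro j hj
    show c.2.1 j = c.2.1 (partsList ν).length
    rw [c.2.2.2.2.2 j hj, c.2.2.2.2.2 (partsList ν).length le_rfl]
  · -- compatibility
    show c.1.1 (partsList μ).length = c.2.1 (partsList ν).length
    rw [c.1.2.2.2.2 (partsList μ).length le_rfl, c.2.2.2.2.2 (partsList ν).length le_rfl]
  · -- fiber condition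
    apply pl_inj
    refine (pl_epPart μ ν _).trans ?_
    show (c.1.1, c.2.1).1 (partsList μ).length = pl l
    exact c.1.2.2.2.2 (partsList μ).length le_rfl
  · intro x
    apply Subtype.ext
    apply Subtype.ext
    show ((x.1.1.1, x.1.1.2) : (ℕ → ℕ → ℕ) × (ℕ → ℕ → ℕ)) = x.1.1
    rfl
  · intro c
    apply Prod.ext
    · apply Subtype.ext
      rfl
    · apply Subtype.ext
      rfl

/-- the full decomposition -/
noncomputable def pairsEquivSigma :
    PairChains n (partsList μ) (partsList ν)
      ≃ Σ l : n.Partition,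
          ChainT (n+1) (partsList μ) (pl l) × ChainT (n+1) (partsList ν) (pl l) :=
  (Equiv.sigmaFiberEquiv (epPart μ ν)).symm.trans
    (Equiv.sigmaCongrRight (fun l => fiberEquiv μ ν l))

end Fiber

lemma pl_le_n {n : ℕ} (l : n.Partition) (t : ℕ) : pl l t ≤ n := by
  rcases lt_or_ge t n with h | h
  · have hsum := pl_sum l (le_rfl : n ≤ n)
    have : pl l t ≤ sz (pl l) n :=
      Finset.single_le_sum (fun _ _ => Nat.zero_le _) (Finset.mem_range.mpr h)
    omega
  · rw [pl_supp l t h]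
    omega

end RSKG

/-- `IM_{μν} = Σ_λ K_{λ μ} · K_{λ ν}`: the number of nonnegative-integer matrices with
row sums `μ` and column sums `ν` is a sum of products of Kostka numbers over partitions
`λ` of `n`. -/
theorem countNatMatrices_eq_sum_kostka (n : ℕ) (μ ν : n.Partition) :
    countNatMatrices (partsList μ) (partsList ν)
      = ∑ l : n.Partition,
          kostka (partsList l) (partsList μ) * kostka (partsList l) (partsList ν) := by

  classical
  have hk : ∀ (l : n.Partition) (c : List ℕ), kostka (partsList l) c
      = Nat.card (RSKG.ChainT (n+1) c (RSKG.pl l)) := by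
    intro l c
    have e : RSKG.SSYTt (partsList l) c ≃ RSKG.ChainT (n+1) c (RSKG.pl l) :=
      RSKG.ssytEquivChain (RSKG.pl_dec l)
        (le_trans (RSKG.partsList_length_le l) (by omega))
    exact Nat.card_congr e
  have e1 := (RSKG.matEquivPairs n μ ν).trans (RSKG.pairsEquivSigma μ ν)
  have h1 : countNatMatrices (partsList μ) (partsList ν)
      = Nat.card (Σ l : n.Partition,
          RSKG.ChainT (n+1) (partsList μ) (RSKG.pl l)
            × RSKG.ChainT (n+1) (partsList ν) (RSKG.pl l)) := Nat.card_congr e1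
  haveI hf1 : ∀ l : n.Partition, Finite (RSKG.ChainT (n+1) (partsList μ) (RSKG.pl l)) :=
    fun l => RSKG.chainT_finite (le_trans (RSKG.partsList_length_le μ) (by omega))
      (RSKG.pl_le_n l)
  haveI hf2 : ∀ l : n.Partition, Finite (RSKG.ChainT (n+1) (partsList ν) (RSKG.pl l)) :=
    fun l => RSKG.chainT_finite (le_trans (RSKG.partsList_length_le ν) (by omega))
      (RSKG.pl_le_n l)
  letI : ∀ l : n.Partition, Fintype (RSKG.ChainT (n+1) (partsList μ) (RSKG.pl l)
      × RSKG.ChainT (n+1) (partsList ν) (RSKG.pl l)) := fun l => Fintype.ofFinite _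
  rw [h1, Nat.card_eq_fintype_card, Fintype.card_sigma]
  apply Finset.sum_congr rfl
  intro l _
  rw [← Nat.card_eq_fintype_card, Nat.card_prod, hk l (partsList μ), hk l (partsList ν)]
end
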